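/- arXiv:2106.03339 — 5 statements merged into one kernel-verified Lean document; each statement's English description precedes it below -/
import Mathlib

section
/- Let s₁, t₁, s₂₁, s₂₂, t₂ ∈ ℝ satisfy s₁² + t₁² = 1, t₁ > 0, s₂₁² + s₂₂² + t₂² = 1, t₂ > 0, and let Ã be either of the 3×3 real matrices Ã₁ = [[1, s₁, s₂₁], [0, t₁, s₂₂], [0, 0, t₂]] or Ã₂ = [[1, −s₁, s₂₁], [0, t₁, s₂₂], [0, 0, t₂]]. Then ‖Ã‖₂ ≤ 2; moreover, for any α₁, α₂, α₃ > 0, letting T ⊂ ℝ³ be the tetrahedron Ã·diag(α₁,α₂,α₃)(T̂) (where T̂ is the reference tetrahedron with vertices (0,0,0), (1,0,0), (0,1,0), (0,0,1) for Ã₁, respectively (0,0,0), (1,0,0), (1,1,0), (0,0,1) for Ã₂), with volume |T|, one has ‖Ã‖₂·‖Ã⁻¹‖₂ ≤ (2/3)·α₁α₂α₃/|T|, and |det(Ã·diag(α₁,α₂,α₃))| = 6|T|. -/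
open MeasureTheory ENNReal

noncomputable section

abbrev Euc (d : ℕ) : Type := EuclideanSpace ℝ (Fin d)

/-- The spectral (ℓ²-operator) norm of a square real matrix. -/
def specNorm {n : ℕ} (A : Matrix (Fin n) (Fin n) ℝ) : ℝ :=
  ‖LinearMap.toContinuousLinearMap (Matrix.toEuclideanLin A)‖

def vec3 (a b c : ℝ) : Euc 3 := (WithLp.equiv 2 (Fin 3 → ℝ)).symm ![a, b, c]

open Matrix Set in
/-! ### Auxiliary volume lemmas -/

section Aux
open Matrix Set

lemma vol_Icc0 (c : ℝ) : volume {z : ℝ | 0 ≤ z ∧ z ≤ c} = ENNReal.ofReal c := by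
  have h : {z : ℝ | 0 ≤ z ∧ z ≤ c} = Set.Icc 0 c := by ext z; simp [Set.mem_Icc]
  rw [h, Real.volume_Icc, sub_zero]

lemma lint_helper (c : ℝ) (hc : 0 ≤ c) (F : ℝ → ℝ≥0∞) (f : ℝ → ℝ) (v : ℝ)
    (hneg : ∀ x : ℝ, x < 0 → F x = 0)
    (hbig : ∀ x : ℝ, c < x → F x = 0)
    (hpos : ∀ x : ℝ, 0 ≤ x → x ≤ c → F x = ENNReal.ofReal (f x))
    (hcont : Continuous f)
    (hnn : ∀ x ∈ Set.Icc 0 c, 0 ≤ f x)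
    (hint : ∫ x in (0:ℝ)..c, f x = v) :
    ∫⁻ x, F x = ENNReal.ofReal v := by
  rw [← lintegral_add_compl F (measurableSet_Ici (a := (0:ℝ)))]
  have h2 : ∫⁻ x in (Set.Ici (0:ℝ))ᶜ, F x = 0 := by
    rw [Set.compl_Ici,
      setLIntegral_congr_fun_ae measurableSet_Iio
        (ae_of_all _ (fun x (hx : x ∈ Set.Iio 0) => hneg x hx.out))]
    simp
  have h3 : ∫⁻ x in Set.Ici (0:ℝ), F x = ENNReal.ofReal v := by
    rw [← Set.Icc_union_Ioi_eq_Ici hc,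
      lintegral_union measurableSet_Ioi
        (Set.disjoint_left.mpr fun x hx hx' => absurd hx.2 (not_le.mpr hx'))]
    have h4 : ∫⁻ x in Set.Ioi c, F x = 0 := by
      rw [setLIntegral_congr_fun_ae measurableSet_Ioi
        (ae_of_all _ (fun x (hx : x ∈ Set.Ioi c) => hbig x hx.out))]
      simp
    rw [h4, add_zero,
      setLIntegral_congr_fun_ae measurableSet_Icc
        (ae_of_all _ (fun x (hx : x ∈ Set.Icc 0 c) => hpos x hx.1 hx.2)),
      ← ofReal_integral_eq_lintegral_ofReal
        (Continuous.integrableOn_Icc hcont)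
        ((ae_restrict_iff' measurableSet_Icc).mpr (ae_of_all _ fun x hx => hnn x hx))]
    rw [integral_Icc_eq_integral_Ioc, ← intervalIntegral.integral_of_le hc, hint]
  rw [h2, h3, add_zero]

lemma vol_tri (c : ℝ) (hc : 0 ≤ c) :
    volume {p : ℝ × ℝ | 0 ≤ p.1 ∧ 0 ≤ p.2 ∧ p.1 + p.2 ≤ c} = ENNReal.ofReal (c ^ 2 / 2) := by
  have hm : MeasurableSet {p : ℝ × ℝ | 0 ≤ p.1 ∧ 0 ≤ p.2 ∧ p.1 + p.2 ≤ c} := by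
    apply MeasurableSet.inter
    · exact measurableSet_le measurable_const measurable_fst
    apply MeasurableSet.inter
    · exact measurableSet_le measurable_const measurable_snd
    · exact measurableSet_le (measurable_fst.add measurable_snd) measurable_const
  rw [Measure.volume_eq_prod, Measure.prod_apply hm]
  have hsl : ∀ x : ℝ, 0 ≤ x →
      Prod.mk x ⁻¹' {p : ℝ × ℝ | 0 ≤ p.1 ∧ 0 ≤ p.2 ∧ p.1 + p.2 ≤ c} =
        {z : ℝ | 0 ≤ z ∧ z ≤ c - x} := by
    intro x hx
    ext z; simp only [Set.mem_preimage, Set.mem_setOf_eq]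
    exact ⟨fun ⟨_, h2, h3⟩ => ⟨h2, by linarith⟩, fun ⟨h2, h3⟩ => ⟨hx, h2, by linarith⟩⟩
  refine lint_helper c hc _ (fun x => c - x) _ ?_ ?_ ?_ (by continuity)
    (fun x hx => by show 0 ≤ c - x; linarith [hx.2]) ?_
  · intro x hx
    convert measure_empty (μ := (volume : Measure ℝ))
    ext z; simp only [Set.mem_preimage, Set.mem_setOf_eq, Set.mem_empty_iff_false, iff_false]
    rintro ⟨h1, -⟩; linarith
  · intro x hx
    rw [hsl x (le_trans hc hx.le), vol_Icc0, ENNReal.ofReal_eq_zero.mpr (by linarith)]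
  · intro x hx _
    rw [hsl x hx, vol_Icc0]
  · rw [intervalIntegral.integral_sub intervalIntegrable_const
      intervalIntegral.intervalIntegrable_id, intervalIntegral.integral_const, integral_id]
    simp; ring

lemma vol_simplex3 :
    volume {p : ℝ × ℝ × ℝ | 0 ≤ p.1 ∧ 0 ≤ p.2.1 ∧ 0 ≤ p.2.2 ∧ p.1 + p.2.1 + p.2.2 ≤ 1} =
      ENNReal.ofReal (1 / 6) := by
  have hm : MeasurableSet {p : ℝ × ℝ × ℝ | 0 ≤ p.1 ∧ 0 ≤ p.2.1 ∧ 0 ≤ p.2.2 ∧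
      p.1 + p.2.1 + p.2.2 ≤ 1} := by
    apply MeasurableSet.inter
    · exact measurableSet_le measurable_const measurable_fst
    apply MeasurableSet.inter
    · exact measurableSet_le measurable_const (measurable_fst.comp measurable_snd)
    apply MeasurableSet.inter
    · exact measurableSet_le measurable_const (measurable_snd.comp measurable_snd)
    · exact measurableSet_le ((measurable_fst.add
        (measurable_fst.comp measurable_snd)).add (measurable_snd.comp measurable_snd))
        measurable_const
  rw [Measure.volume_eq_prod, Measure.prod_apply hm]
  have hsl : ∀ x : ℝ, 0 ≤ x →
      Prod.mk x ⁻¹' {p : ℝ × ℝ × ℝ | 0 ≤ p.1 ∧ 0 ≤ p.2.1 ∧ 0 ≤ p.2.2 ∧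
        p.1 + p.2.1 + p.2.2 ≤ 1} =
      {q : ℝ × ℝ | 0 ≤ q.1 ∧ 0 ≤ q.2 ∧ q.1 + q.2 ≤ 1 - x} := by
    intro x hx
    ext q; simp only [Set.mem_preimage, Set.mem_setOf_eq]
    exact ⟨fun ⟨_, h2, h3, h4⟩ => ⟨h2, h3, by linarith⟩,
      fun ⟨h2, h3, h4⟩ => ⟨hx, h2, h3, by linarith⟩⟩
  refine lint_helper 1 one_pos.le _ (fun x => (1 - x) ^ 2 / 2) _ ?_ ?_ ?_ (by continuity)
    (fun x hx => by positivity) ?_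
  · intro x hx
    convert measure_empty (μ := (volume : Measure (ℝ × ℝ)))
    ext q; simp only [Set.mem_preimage, Set.mem_setOf_eq, Set.mem_empty_iff_false, iff_false]
    rintro ⟨h1, -⟩; linarith
  · intro x hx
    rw [hsl x (by linarith)]
    convert measure_empty (μ := (volume : Measure (ℝ × ℝ)))
    ext q; simp only [Set.mem_setOf_eq, Set.mem_empty_iff_false, iff_false]
    rintro ⟨h1, h2, h3⟩; linarith
  · intro x hx hx1
    rw [hsl x hx]; exact vol_tri (1 - x) (by linarith)
  · have : ∀ x : ℝ, (1 - x) ^ 2 / 2 = 1 / 2 - x + 1 / 2 * x ^ 2 := fun x => by ring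
    simp_rw [this]
    rw [intervalIntegral.integral_add (by apply Continuous.intervalIntegrable; continuity)
          (by apply Continuous.intervalIntegrable; continuity),
        intervalIntegral.integral_sub (by apply Continuous.intervalIntegrable; continuity)
          (by apply Continuous.intervalIntegrable; continuity),
        intervalIntegral.integral_const, intervalIntegral.integral_const_mul, integral_id,
        integral_pow]
    norm_num

lemma vol_K : volume {x : Fin 3 → ℝ | 0 ≤ x 0 ∧ 0 ≤ x 1 ∧ 0 ≤ x 2 ∧ x 0 + x 1 + x 2 ≤ 1} =
    ENNReal.ofReal (1 / 6) := by
  have hm : MeasurableSet {p : ℝ × ℝ × ℝ | 0 ≤ p.1 ∧ 0 ≤ p.2.1 ∧ 0 ≤ p.2.2 ∧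
      p.1 + p.2.1 + p.2.2 ≤ 1} := by
    apply MeasurableSet.inter
    · exact measurableSet_le measurable_const measurable_fst
    apply MeasurableSet.inter
    · exact measurableSet_le measurable_const (measurable_fst.comp measurable_snd)
    apply MeasurableSet.inter
    · exact measurableSet_le measurable_const (measurable_snd.comp measurable_snd)
    · exact measurableSet_le ((measurable_fst.add
        (measurable_fst.comp measurable_snd)).add (measurable_snd.comp measurable_snd))
        measurable_const
  have mp1 := measurePreserving_piFinSuccAbove (fun _ : Fin 3 => (volume : Measure ℝ)) 0
  have mp2 := (MeasurePreserving.id (volume : Measure ℝ)).prod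
    (volume_preserving_finTwoArrow ℝ)
  have mp := mp2.comp mp1
  have hpre : (Prod.map id (MeasurableEquiv.finTwoArrow) ∘
      (MeasurableEquiv.piFinSuccAbove (fun _ : Fin 3 => ℝ) 0)) ⁻¹'
      {p : ℝ × ℝ × ℝ | 0 ≤ p.1 ∧ 0 ≤ p.2.1 ∧ 0 ≤ p.2.2 ∧ p.1 + p.2.1 + p.2.2 ≤ 1} =
      {x : Fin 3 → ℝ | 0 ≤ x 0 ∧ 0 ≤ x 1 ∧ 0 ≤ x 2 ∧ x 0 + x 1 + x 2 ≤ 1} := by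
    ext x
    simp [MeasurableEquiv.piFinSuccAbove, MeasurableEquiv.finTwoArrow, Fin.succAbove_zero,
      Fin.tail, and_assoc]
  rw [← hpre, volume_pi, mp.measure_preimage hm.nullMeasurableSet, ← Measure.volume_eq_prod]
  exact vol_simplex3

lemma hullK : convexHull ℝ {(0 : Fin 3 → ℝ), ![1,0,0], ![0,1,0], ![0,0,1]} =
    {x : Fin 3 → ℝ | 0 ≤ x 0 ∧ 0 ≤ x 1 ∧ 0 ≤ x 2 ∧ x 0 + x 1 + x 2 ≤ 1} := by
  apply subset_antisymm
  · apply convexHull_min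
    · intro y hy
      simp only [Set.mem_insert_iff, Set.mem_singleton_iff] at hy
      rcases hy with h | h | h | h <;> subst h <;> norm_num [Matrix.cons_val_two, Matrix.tail_cons, Matrix.head_cons]
    · rintro x ⟨hx0, hx1, hx2, hxs⟩ y ⟨hy0, hy1, hy2, hys⟩ a b ha hb hab
      refine ⟨?_, ?_, ?_, ?_⟩ <;>
        simp only [Pi.add_apply, Pi.smul_apply, smul_eq_mul] <;> nlinarith
  · rintro x ⟨hx0, hx1, hx2, hxs⟩
    have h := Finset.centerMass_mem_convexHull (Finset.univ : Finset (Fin 4))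
      (s := {(0 : Fin 3 → ℝ), ![1,0,0], ![0,1,0], ![0,0,1]})
      (w := ![1 - x 0 - x 1 - x 2, x 0, x 1, x 2])
      (z := ![(0 : Fin 3 → ℝ), ![1,0,0], ![0,1,0], ![0,0,1]])
      (by intro i _; fin_cases i <;> simp <;> linarith)
      (by simp [Fin.sum_univ_four]; linarith)
      (by intro i _; fin_cases i <;> simp [Set.mem_insert_iff])
    convert h using 1
    rw [Finset.centerMass]
    have hsum : ∑ i : Fin 4, ![1 - x 0 - x 1 - x 2, x 0, x 1, x 2] i = 1 := by
      simp [Fin.sum_univ_four]; ring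
    rw [hsum, inv_one, one_smul, Fin.sum_univ_four]
    funext j
    fin_cases j <;> simp <;> ring

lemma vol_S0 : volume (convexHull ℝ {(0 : Euc 3), vec3 1 0 0, vec3 0 1 0, vec3 0 0 1}) =
    ENNReal.ofReal (1 / 6) := by
  have hK : MeasurableSet {x : Fin 3 → ℝ | 0 ≤ x 0 ∧ 0 ≤ x 1 ∧ 0 ≤ x 2 ∧
      x 0 + x 1 + x 2 ≤ 1} := by
    apply MeasurableSet.inter
    · exact measurableSet_le measurable_const (measurable_pi_apply 0)
    apply MeasurableSet.inter
    · exact measurableSet_le measurable_const (measurable_pi_apply 1)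
    apply MeasurableSet.inter
    · exact measurableSet_le measurable_const (measurable_pi_apply 2)
    · exact measurableSet_le (((measurable_pi_apply 0).add (measurable_pi_apply 1)).add
        (measurable_pi_apply 2)) measurable_const
  have hset : convexHull ℝ {(0 : Euc 3), vec3 1 0 0, vec3 0 1 0, vec3 0 0 1} =
      ⇑(MeasurableEquiv.toLp 2 (Fin 3 → ℝ)).symm ⁻¹'
        {x : Fin 3 → ℝ | 0 ≤ x 0 ∧ 0 ≤ x 1 ∧ 0 ≤ x 2 ∧ x 0 + x 1 + x 2 ≤ 1} := by
    have h1 : ((WithLp.linearEquiv 2 ℝ (Fin 3 → ℝ)).symm.toLinearMap) ''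
        (convexHull ℝ {(0 : Fin 3 → ℝ), ![1,0,0], ![0,1,0], ![0,0,1]}) =
        convexHull ℝ {(0 : Euc 3), vec3 1 0 0, vec3 0 1 0, vec3 0 0 1} := by
      rw [LinearMap.image_convexHull]
      congr 1
      simp only [Set.image_insert_eq, Set.image_singleton, map_zero]
      rfl
    rw [hullK] at h1
    rw [← h1]
    ext x
    constructor
    · rintro ⟨y, hy, rfl⟩; exact hy
    · intro hx; exact ⟨WithLp.equiv 2 (Fin 3 → ℝ) x, hx, rfl⟩
  rw [hset, (EuclideanSpace.volume_preserving_symm_measurableEquiv_toLp (Fin 3)).measure_preimage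
    hK.nullMeasurableSet]
  exact vol_K

lemma vol_tetra (a b c d e f g h i : ℝ) :
    volume (convexHull ℝ {(0 : Euc 3), vec3 a d g, vec3 b e h, vec3 c f i}) =
      ENNReal.ofReal (|Matrix.det !![a,b,c;d,e,f;g,h,i]| / 6) := by
  set N : Matrix (Fin 3) (Fin 3) ℝ := !![a,b,c;d,e,f;g,h,i] with hN
  have hc : ∀ v : Fin 3 → ℝ, Matrix.toEuclideanLin N ((WithLp.equiv 2 (Fin 3 → ℝ)).symm v) =
      (WithLp.equiv 2 (Fin 3 → ℝ)).symm (N *ᵥ v) :=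
    fun v => rfl
  have h0 : Matrix.toEuclideanLin N (vec3 1 0 0) = vec3 a d g := by
    rw [vec3, hc]; unfold vec3; congr 1
    funext j; fin_cases j <;> simp [hN, Matrix.mulVec, dotProduct, Fin.sum_univ_three]
  have h1 : Matrix.toEuclideanLin N (vec3 0 1 0) = vec3 b e h := by
    rw [vec3, hc]; unfold vec3; congr 1
    funext j; fin_cases j <;> simp [hN, Matrix.mulVec, dotProduct, Fin.sum_univ_three]
  have h2 : Matrix.toEuclideanLin N (vec3 0 0 1) = vec3 c f i := by
    rw [vec3, hc]; unfold vec3; congr 1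
    funext j; fin_cases j <;> simp [hN, Matrix.mulVec, dotProduct, Fin.sum_univ_three]
  have himg : convexHull ℝ {(0 : Euc 3), vec3 a d g, vec3 b e h, vec3 c f i} =
      (Matrix.toEuclideanLin N) ''
        (convexHull ℝ {(0 : Euc 3), vec3 1 0 0, vec3 0 1 0, vec3 0 0 1}) := by
    rw [LinearMap.image_convexHull]
    congr 1
    simp only [Set.image_insert_eq, Set.image_singleton, map_zero, h0, h1, h2]
  rw [himg, Measure.addHaar_image_linearMap, vol_S0]
  rw [show LinearMap.det (Matrix.toEuclideanLin N) = N.det from by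
    rw [Matrix.toEuclideanLin_eq_toLin, LinearMap.det_toLin]]
  rw [← ENNReal.ofReal_mul (abs_nonneg _)]
  congr 1; ring

/-! ### Auxiliary spectral norm lemmas -/

lemma specNorm_nonneg' {n : ℕ} (A : Matrix (Fin n) (Fin n) ℝ) : 0 ≤ specNorm A :=
  norm_nonneg _

lemma specNorm_smul {n : ℕ} (c : ℝ) (A : Matrix (Fin n) (Fin n) ℝ) :
    specNorm (c • A) = |c| * specNorm A := by
  unfold specNorm
  rw [_root_.map_smul, _root_.map_smul]
  have h := norm_smul (α := ℝ) (β := Euc n →L[ℝ] Euc n) c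
    (LinearMap.toContinuousLinearMap (Matrix.toEuclideanLin A))
  rw [Real.norm_eq_abs] at h
  exact h

lemma euc3_norm (v : Euc 3) : ‖v‖ = Real.sqrt ((v 0)^2 + (v 1)^2 + (v 2)^2) := by
  rw [EuclideanSpace.norm_eq]
  simp [Fin.sum_univ_three, Real.norm_eq_abs, sq_abs]

lemma specNorm_le_frob (a b c d e f g h i C : ℝ) (hC : 0 ≤ C)
    (hf : a^2+b^2+c^2+d^2+e^2+f^2+g^2+h^2+i^2 ≤ C^2) :
    specNorm !![a,b,c;d,e,f;g,h,i] ≤ C := by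
  unfold specNorm
  apply ContinuousLinearMap.opNorm_le_bound _ hC
  intro x
  rw [LinearMap.coe_toContinuousLinearMap']
  have key : ∀ j : Fin 3, (Matrix.toEuclideanLin !![a,b,c;d,e,f;g,h,i] x) j =
      (!![a,b,c;d,e,f;g,h,i] *ᵥ (fun k => x k)) j := fun j => rfl
  rw [euc3_norm, euc3_norm x, key 0, key 1, key 2]
  have hmv : ∀ j : Fin 3, (!![a,b,c;d,e,f;g,h,i] *ᵥ (fun k => x k)) j =
      ![a * x 0 + b * x 1 + c * x 2, d * x 0 + e * x 1 + f * x 2,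
        g * x 0 + h * x 1 + i * x 2] j := by
    intro j; fin_cases j <;>
      simp [Matrix.mulVec, dotProduct, Fin.sum_univ_three]
  rw [hmv 0, hmv 1, hmv 2]
  have hCp : C * Real.sqrt ((x 0)^2 + (x 1)^2 + (x 2)^2) =
      Real.sqrt (C^2 * ((x 0)^2 + (x 1)^2 + (x 2)^2)) := by
    rw [Real.sqrt_mul (sq_nonneg C), Real.sqrt_sq hC]
  rw [hCp]
  apply Real.sqrt_le_sqrt
  have cs : ∀ p q r : ℝ, (p * x 0 + q * x 1 + r * x 2)^2 ≤
      (p^2 + q^2 + r^2) * ((x 0)^2 + (x 1)^2 + (x 2)^2) := fun p q r => by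
    nlinarith [sq_nonneg (p * x 1 - q * x 0), sq_nonneg (p * x 2 - r * x 0),
      sq_nonneg (q * x 2 - r * x 1)]
  have hS : (0:ℝ) ≤ (x 0)^2 + (x 1)^2 + (x 2)^2 := by positivity
  simp only [Matrix.cons_val_zero, Matrix.cons_val_one, Matrix.head_cons,
    Matrix.cons_val_two, Matrix.tail_cons]
  nlinarith [cs a b c, cs d e f, cs g h i, mul_le_mul_of_nonneg_right hf hS]

/-- Master norm bounds for `A = !![1, s, s₂₁; 0, t₁, s₂₂; 0, 0, t₂]`. -/
lemma norm_bounds (s t₁ s₂₁ s₂₂ t₂ : ℝ)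
    (h1 : s ^ 2 + t₁ ^ 2 = 1) (ht₁ : 0 < t₁)
    (h2 : s₂₁ ^ 2 + s₂₂ ^ 2 + t₂ ^ 2 = 1) (ht₂ : 0 < t₂) :
    specNorm !![1, s, s₂₁; 0, t₁, s₂₂; 0, 0, t₂] ≤ 2 ∧
    specNorm (!![1, s, s₂₁; 0, t₁, s₂₂; 0, 0, t₂])⁻¹ ≤ 2 / (t₁ * t₂) := by
  constructor
  · apply specNorm_le_frob _ _ _ _ _ _ _ _ _ _ (by norm_num)
    nlinarith
  · have hinv : (!![1, s, s₂₁; 0, t₁, s₂₂; 0, 0, t₂])⁻¹ =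
        (t₁ * t₂)⁻¹ • !![t₁*t₂, -(s*t₂), s*s₂₂ - s₂₁*t₁; 0, t₂, -s₂₂; 0, 0, t₁] := by
      apply Matrix.inv_eq_right_inv
      ext i j
      fin_cases i <;> fin_cases j <;>
        simp [Matrix.mul_apply, Fin.sum_univ_three, Matrix.smul_apply, Matrix.one_apply,
          Matrix.vecHead, Matrix.vecTail] <;>
        field_simp <;> ring
    rw [hinv, specNorm_smul, abs_of_pos (by positivity)]
    have hb : specNorm !![t₁*t₂, -(s*t₂), s*s₂₂ - s₂₁*t₁; 0, t₂, -s₂₂; 0, 0, t₁] ≤ 2 := by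
      apply specNorm_le_frob _ _ _ _ _ _ _ _ _ _ (by norm_num)
      nlinarith [sq_nonneg (s*s₂₁ + t₁*s₂₂), sq_nonneg s, sq_nonneg s₂₁, sq_nonneg s₂₂,
        sq_nonneg t₂, sq_nonneg t₁, sq_nonneg (t₁*t₂), mul_pos ht₁ ht₂]
    calc (t₁ * t₂)⁻¹ * specNorm !![t₁*t₂, -(s*t₂), s*s₂₂ - s₂₁*t₁; 0, t₂, -s₂₂; 0, 0, t₁]
        ≤ (t₁ * t₂)⁻¹ * 2 := by
          apply mul_le_mul_of_nonneg_left hb (by positivity)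
      _ = 2 / (t₁ * t₂) := by field_simp

end Aux


/-- for `Ã = Ã₁ = [[1, s₁, s₂₁],[0, t₁, s₂₂],[0, 0, t₂]]` (`typ = true`)
or `Ã = Ã₂ = [[1, −s₁, s₂₁],[0, t₁, s₂₂],[0, 0, t₂]]` (`typ = false`), with
`s₁² + t₁² = 1`, `t₁ > 0`, `s₂₁² + s₂₂² + t₂² = 1`, `t₂ > 0`:
`‖Ã‖₂ ≤ 2`, and for all `α₁, α₂, α₃ > 0`, with `T = Ã·diag(α₁,α₂,α₃)(T̂)` the
corresponding tetrahedron (type i reference for `Ã₁`, type ii for `Ã₂`), one has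
`‖Ã‖₂ ‖Ã⁻¹‖₂ ≤ (2/3) α₁α₂α₃ / |T|` and `|det (Ã·diag(α₁,α₂,α₃))| = 6 |T|`. -/
theorem stmt_1 (s₁ t₁ s₂₁ s₂₂ t₂ : ℝ)
    (h1 : s₁ ^ 2 + t₁ ^ 2 = 1) (ht₁ : 0 < t₁)
    (h2 : s₂₁ ^ 2 + s₂₂ ^ 2 + t₂ ^ 2 = 1) (ht₂ : 0 < t₂) :
    ∀ typ : Bool,
      specNorm (if typ then !![1, s₁, s₂₁; 0, t₁, s₂₂; 0, 0, t₂]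
                else !![1, -s₁, s₂₁; 0, t₁, s₂₂; 0, 0, t₂]) ≤ 2 ∧
      ∀ α₁ α₂ α₃ : ℝ, 0 < α₁ → 0 < α₂ → 0 < α₃ →
        (specNorm (if typ then !![1, s₁, s₂₁; 0, t₁, s₂₂; 0, 0, t₂]
              else !![1, -s₁, s₂₁; 0, t₁, s₂₂; 0, 0, t₂]) *
            specNorm (if typ then !![1, s₁, s₂₁; 0, t₁, s₂₂; 0, 0, t₂]
              else !![1, -s₁, s₂₁; 0, t₁, s₂₂; 0, 0, t₂])⁻¹ ≤
          2 / 3 * (α₁ * α₂ * α₃) /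
            (volume (if typ then
                convexHull ℝ {(0 : Euc 3), vec3 α₁ 0 0, vec3 (α₂ * s₁) (α₂ * t₁) 0,
                  vec3 (α₃ * s₂₁) (α₃ * s₂₂) (α₃ * t₂)}
              else
                convexHull ℝ {(0 : Euc 3), vec3 α₁ 0 0, vec3 (α₁ - α₂ * s₁) (α₂ * t₁) 0,
                  vec3 (α₃ * s₂₁) (α₃ * s₂₂) (α₃ * t₂)})).toReal) ∧
        |((if typ then !![1, s₁, s₂₁; 0, t₁, s₂₂; 0, 0, t₂]
              else !![1, -s₁, s₂₁; 0, t₁, s₂₂; 0, 0, t₂]) *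
            Matrix.diagonal ![α₁, α₂, α₃]).det| =
          6 * (volume (if typ then
                convexHull ℝ {(0 : Euc 3), vec3 α₁ 0 0, vec3 (α₂ * s₁) (α₂ * t₁) 0,
                  vec3 (α₃ * s₂₁) (α₃ * s₂₂) (α₃ * t₂)}
              else
                convexHull ℝ {(0 : Euc 3), vec3 α₁ 0 0, vec3 (α₁ - α₂ * s₁) (α₂ * t₁) 0,
                  vec3 (α₃ * s₂₁) (α₃ * s₂₂) (α₃ * t₂)})).toReal := by
  intro typ
  have ht₁' := ht₁.ne'
  have ht₂' := ht₂.ne'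
  cases typ
  · -- type ii
    simp only [Bool.false_eq_true, if_false]
    obtain ⟨hA, hAinv⟩ := norm_bounds (-s₁) t₁ s₂₁ s₂₂ t₂ (by nlinarith) ht₁ h2 ht₂
    refine ⟨hA, fun α₁ α₂ α₃ hα₁ hα₂ hα₃ => ?_⟩
    have hdet : Matrix.det !![α₁, α₁ - α₂*s₁, α₃*s₂₁; 0, α₂*t₁, α₃*s₂₂; 0, 0, α₃*t₂] =
        α₁*α₂*α₃*(t₁*t₂) := by
      simp [Matrix.det_fin_three, Matrix.vecHead, Matrix.vecTail]; ring
    have hvol := vol_tetra α₁ (α₁ - α₂*s₁) (α₃*s₂₁) 0 (α₂*t₁) (α₃*s₂₂) 0 0 (α₃*t₂)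
    rw [hdet, abs_of_pos (by positivity)] at hvol
    have hvt : (volume (convexHull ℝ {(0 : Euc 3), vec3 α₁ 0 0,
        vec3 (α₁ - α₂ * s₁) (α₂ * t₁) 0,
        vec3 (α₃ * s₂₁) (α₃ * s₂₂) (α₃ * t₂)})).toReal = α₁*α₂*α₃*(t₁*t₂)/6 := by
      rw [show vec3 α₁ 0 0 = vec3 α₁ (0:ℝ) (0:ℝ) from rfl] at hvol ⊢
      rw [hvol, ENNReal.toReal_ofReal (by positivity)]
    constructor
    · rw [hvt]
      have hrhs : 2/3*(α₁*α₂*α₃)/(α₁*α₂*α₃*(t₁*t₂)/6) = 4/(t₁*t₂) := by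
        rw [div_eq_div_iff (by positivity) (by positivity)]; ring
      rw [hrhs]
      calc specNorm !![1, -s₁, s₂₁; 0, t₁, s₂₂; 0, 0, t₂] *
            specNorm (!![1, -s₁, s₂₁; 0, t₁, s₂₂; 0, 0, t₂])⁻¹
          ≤ 2 * (2/(t₁*t₂)) :=
            mul_le_mul hA hAinv (specNorm_nonneg' _) (by norm_num)
        _ = 4/(t₁*t₂) := by ring
    · rw [hvt, Matrix.det_mul, Matrix.det_diagonal]
      have hdA : Matrix.det !![1, -s₁, s₂₁; 0, t₁, s₂₂; 0, 0, t₂] = t₁*t₂ := by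
        simp [Matrix.det_fin_three, Matrix.vecHead, Matrix.vecTail]
      rw [hdA, Fin.prod_univ_three]
      simp only [Matrix.cons_val_zero, Matrix.cons_val_one, Matrix.head_cons,
        Matrix.cons_val_two, Matrix.tail_cons]
      rw [abs_of_pos (by positivity)]; ring
  · -- type i
    simp only [if_true]
    obtain ⟨hA, hAinv⟩ := norm_bounds s₁ t₁ s₂₁ s₂₂ t₂ h1 ht₁ h2 ht₂
    refine ⟨hA, fun α₁ α₂ α₃ hα₁ hα₂ hα₃ => ?_⟩
    have hdet : Matrix.det !![α₁, α₂*s₁, α₃*s₂₁; 0, α₂*t₁, α₃*s₂₂; 0, 0, α₃*t₂] =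
        α₁*α₂*α₃*(t₁*t₂) := by
      simp [Matrix.det_fin_three, Matrix.vecHead, Matrix.vecTail]; ring
    have hvol := vol_tetra α₁ (α₂*s₁) (α₃*s₂₁) 0 (α₂*t₁) (α₃*s₂₂) 0 0 (α₃*t₂)
    rw [hdet, abs_of_pos (by positivity)] at hvol
    have hvt : (volume (convexHull ℝ {(0 : Euc 3), vec3 α₁ 0 0,
        vec3 (α₂ * s₁) (α₂ * t₁) 0,
        vec3 (α₃ * s₂₁) (α₃ * s₂₂) (α₃ * t₂)})).toReal = α₁*α₂*α₃*(t₁*t₂)/6 := by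
      rw [show vec3 α₁ 0 0 = vec3 α₁ (0:ℝ) (0:ℝ) from rfl] at hvol ⊢
      rw [hvol, ENNReal.toReal_ofReal (by positivity)]
    constructor
    · rw [hvt]
      have hrhs : 2/3*(α₁*α₂*α₃)/(α₁*α₂*α₃*(t₁*t₂)/6) = 4/(t₁*t₂) := by
        rw [div_eq_div_iff (by positivity) (by positivity)]; ring
      rw [hrhs]
      calc specNorm !![1, s₁, s₂₁; 0, t₁, s₂₂; 0, 0, t₂] *
            specNorm (!![1, s₁, s₂₁; 0, t₁, s₂₂; 0, 0, t₂])⁻¹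
          ≤ 2 * (2/(t₁*t₂)) :=
            mul_le_mul hA hAinv (specNorm_nonneg' _) (by norm_num)
        _ = 4/(t₁*t₂) := by ring
    · rw [hvt, Matrix.det_mul, Matrix.det_diagonal]
      have hdA : Matrix.det !![1, s₁, s₂₁; 0, t₁, s₂₂; 0, 0, t₂] = t₁*t₂ := by
        simp [Matrix.det_fin_three, Matrix.vecHead, Matrix.vecTail]
      rw [hdA, Fin.prod_univ_three]
      simp only [Matrix.cons_val_zero, Matrix.cons_val_one, Matrix.head_cons,
        Matrix.cons_val_two, Matrix.tail_cons]
      rw [abs_of_pos (by positivity)]; ring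
end
end

section
/- Let T ⊂ ℝ³ be a tetrahedron in standard position (d = 3, type i or type ii) satisfying Condition 2. Then (1/2)·H_{T₀} < H_T < 2·H_{T₀}, where H_T := (α₁α₂α₃/|T|)·h_T and H_{T₀} := (h_T²/|T|)·min_{i≠j} |L_i||L_j| is computed from the edge lengths L_i, the diameter h_T, and the volume |T| of T. -/
open MeasureTheory ENNReal

noncomputable section

lemma euc_zero : (0 : Euc 3) = vec3 0 0 0 := by
  ext i; fin_cases i <;> rfl

lemma dist_vec3 (a b c a' b' c' : ℝ) :
    dist (vec3 a b c) (vec3 a' b' c') = Real.sqrt ((a-a')^2+(b-b')^2+(c-c')^2) := by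
  rw [EuclideanSpace.dist_eq]
  congr 1
  simp [vec3, Fin.sum_univ_three, WithLp.equiv_symm_apply, PiLp.toLp_apply, Real.dist_eq, sq_abs]

lemma sq_dist_vec3 (a b c a' b' c' : ℝ) :
    (dist (vec3 a b c) (vec3 a' b' c'))^2 = (a-a')^2+(b-b')^2+(c-c')^2 := by
  rw [dist_vec3, Real.sq_sqrt (by positivity)]

lemma vol_pos (a u v w z e : ℝ) (ha : a ≠ 0) (hv : v ≠ 0) (he : e ≠ 0) :
    0 < (volume (convexHull ℝ ({vec3 0 0 0, vec3 a 0 0, vec3 u v 0, vec3 w z e} :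
      Set (Euc 3)))).toReal := by
  set pts : Set (Euc 3) := {vec3 0 0 0, vec3 a 0 0, vec3 u v 0, vec3 w z e} with hpts
  have hfin : pts.Finite := Set.toFinite _
  have hcomp : IsCompact (convexHull ℝ pts) := hfin.isCompact_convexHull ℝ
  have hne_top : volume (convexHull ℝ pts) ≠ ⊤ := hcomp.measure_lt_top.ne
  have hspan : affineSpan ℝ pts = ⊤ := by
    rw [AffineSubspace.affineSpan_eq_top_iff_vectorSpan_eq_top_of_nonempty ℝ _ _
      ⟨vec3 0 0 0, by simp [hpts]⟩]
    rw [eq_top_iff]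
    rintro y -
    have m2 : vec3 a 0 0 -ᵥ vec3 0 0 0 ∈ vectorSpan ℝ pts :=
      vsub_mem_vectorSpan ℝ (by simp [hpts]) (by simp [hpts])
    have m3 : vec3 u v 0 -ᵥ vec3 0 0 0 ∈ vectorSpan ℝ pts :=
      vsub_mem_vectorSpan ℝ (by simp [hpts]) (by simp [hpts])
    have m4 : vec3 w z e -ᵥ vec3 0 0 0 ∈ vectorSpan ℝ pts :=
      vsub_mem_vectorSpan ℝ (by simp [hpts]) (by simp [hpts])
    have hy : y = ((y 0 - ((y 1 - (y 2/e)*z)/v)*u - (y 2/e)*w)/a) • (vec3 a 0 0 -ᵥ vec3 0 0 0)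
        + ((y 1 - (y 2/e)*z)/v) • (vec3 u v 0 -ᵥ vec3 0 0 0)
        + (y 2/e) • (vec3 w z e -ᵥ vec3 0 0 0) := by
      ext i
      fin_cases i <;>
        · simp [vec3, WithLp.equiv_symm_apply, PiLp.toLp_apply, vsub_eq_sub, PiLp.sub_apply, PiLp.add_apply,
            PiLp.smul_apply, smul_eq_mul]
          field_simp
          try ring
    rw [hy]
    exact Submodule.add_mem _ (Submodule.add_mem _ (Submodule.smul_mem _ _ m2)
      (Submodule.smul_mem _ _ m3)) (Submodule.smul_mem _ _ m4)
  have hint : (interior (convexHull ℝ pts)).Nonempty := by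
    rw [(convex_convexHull ℝ pts).interior_nonempty_iff_affineSpan_eq_top,
      affineSpan_convexHull]
    exact hspan
  have hpos : 0 < volume (convexHull ℝ pts) :=
    Measure.measure_pos_of_nonempty_interior _ hint
  exact ENNReal.toReal_pos hpos.ne' hne_top


lemma aux_half_lt (A d x y z : ℝ) (hA : 0 < A) (hd : 0 ≤ d) (hx : A/2 ≤ x)
    (hz : z ≠ 0) (hsq : d^2 = x^2+y^2+z^2) : A < 2*d := by
  have h4 : A^2 < (2*d)^2 := by
    nlinarith [sq_nonneg y, (by positivity : 0 < z^2)]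
  exact lt_of_pow_lt_pow_left₀ 2 (by positivity) h4

lemma aux_lt_two (α₁ α₃ s₂₁ s₂₂ t₂ d : ℝ) (hα₁ : 0 < α₁) (hα₃ : 0 < α₃)
    (h2 : s₂₁ ^ 2 + s₂₂ ^ 2 + t₂ ^ 2 = 1) (ht₂ : 0 < t₂) (hle : α₃ ≤ α₁) (hd : 0 ≤ d)
    (hsq : d^2 = (α₁-α₃*s₂₁)^2 + (α₃*s₂₂)^2 + (α₃*t₂)^2) : d < 2*α₁ := by
  have hs21sq : s₂₁^2 < 1 := by nlinarith [sq_nonneg s₂₂, mul_pos ht₂ ht₂]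
  have hs21 : -1 < s₂₁ := by nlinarith [sq_nonneg (s₂₁+1)]
  have h4 : d^2 < (2*α₁)^2 := by
    nlinarith [mul_pos (mul_pos hα₁ hα₃) (by linarith : (0:ℝ) < s₂₁+1),
      mul_nonneg (by linarith : (0:ℝ) ≤ 3*α₁+α₃) (by linarith : (0:ℝ) ≤ α₁-α₃)]
  exact lt_of_pow_lt_pow_left₀ 2 (by positivity) h4

lemma aux_key34i (α₂ α₃ s₁ t₁ s₂₁ s₂₂ t₂ d : ℝ) (hα₂ : 0 < α₂) (hα₃ : 0 < α₃)
    (h1 : s₁ ^ 2 + t₁ ^ 2 = 1) (h2 : s₂₁ ^ 2 + s₂₂ ^ 2 + t₂ ^ 2 = 1) (ht₂ : 0 < t₂)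
    (hd : α₂ ≤ d)
    (hsq : d^2 = (α₂*s₁-α₃*s₂₁)^2 + (α₂*t₁-α₃*s₂₂)^2 + (α₃*t₂)^2) : α₃ < 2*d := by
  have hd0 : 0 ≤ d := le_trans hα₂.le hd
  have hid : (s₁*s₂₁+t₁*s₂₂)^2 + (s₁*s₂₂-t₁*s₂₁)^2 = 1 - t₂^2 := by
    linear_combination (s₂₁^2+s₂₂^2) * h1 + h2
  have hk : s₁*s₂₁+t₁*s₂₂ < 1 := by
    nlinarith [sq_nonneg (s₁*s₂₂-t₁*s₂₁), mul_pos ht₂ ht₂, sq_nonneg (s₁*s₂₁+t₁*s₂₂-1)]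
  have hdsq : d^2 = α₂^2 + α₃^2 - 2*α₂*α₃*(s₁*s₂₁+t₁*s₂₂) := by
    rw [hsq]; linear_combination α₂^2 * h1 + α₃^2 * h2
  have hA : α₂^2 ≤ d^2 := by nlinarith
  have h4 : α₃^2 < (2*d)^2 := by
    nlinarith [sq_nonneg (2*α₂-α₃),
      mul_pos (mul_pos hα₂ hα₃) (by linarith : (0:ℝ) < 1 - (s₁*s₂₁+t₁*s₂₂))]
  exact lt_of_pow_lt_pow_left₀ 2 (by positivity) h4

lemma aux_key34ii (α₁ α₂ α₃ s₁ t₁ s₂₁ s₂₂ t₂ d : ℝ)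
    (hα₁ : 0 < α₁) (hα₂ : 0 < α₂) (hα₃ : 0 < α₃)
    (h1 : s₁ ^ 2 + t₁ ^ 2 = 1) (h2 : s₂₁ ^ 2 + s₂₂ ^ 2 + t₂ ^ 2 = 1) (ht₂ : 0 < t₂)
    (hc2 : α₃ * s₂₁ ≤ α₁ / 2) (hd : α₂ ≤ d)
    (hsq : d^2 = (α₁-α₂*s₁-α₃*s₂₁)^2 + (α₂*t₁-α₃*s₂₂)^2 + (α₃*t₂)^2) : α₃ < 2*d := by
  have hd0 : 0 ≤ d := le_trans hα₂.le hd
  have hid2 : 2*((α₁-α₂*s₁-α₃*s₂₁)^2 + (α₂*t₁-α₃*s₂₂)^2 + (α₃*t₂)^2) + 2*α₂^2 - α₃^2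
      = (α₁-α₃*s₂₁-2*α₂*s₁)^2 + α₁*(α₁-2*(α₃*s₂₁)) + (α₃*s₂₂-2*α₂*t₁)^2 + (α₃*t₂)^2 := by
    linear_combination (-2*α₂^2) * h1 + α₃^2 * h2
  have hA : α₂^2 ≤ d^2 := by nlinarith
  have h4 : α₃^2 < (2*d)^2 := by
    nlinarith [hid2, sq_nonneg (α₁-α₃*s₂₁-2*α₂*s₁), sq_nonneg (α₃*s₂₂-2*α₂*t₁),
      mul_nonneg hα₁.le (by linarith : (0:ℝ) ≤ α₁-2*(α₃*s₂₁)),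
      mul_pos (mul_pos hα₃ hα₃) (mul_pos ht₂ ht₂)]
  exact lt_of_pow_lt_pow_left₀ 2 (by positivity) h4

lemma aux_good1 (α₁ α₃ Li hT : ℝ) (h : α₁ < 2*Li) (h3 : α₃ ≤ hT) (hα₁ : 0 < α₁)
    (hα₃ : 0 < α₃) (hT0 : 0 < hT) : α₁*α₃ < 2*Li*hT := by
  have hLi : 0 < Li := by linarith
  nlinarith [mul_lt_mul_of_pos_right h hα₃, mul_le_mul_of_nonneg_left h3 hLi.le]

lemma aux_good2 (α₁ α₃ Li hT : ℝ) (h : α₃ < 2*Li) (h1 : α₁ ≤ hT) (hα₁ : 0 < α₁)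
    (hα₃ : 0 < α₃) (hT0 : 0 < hT) : α₁*α₃ < 2*Li*hT := by
  have hLi : 0 < Li := by linarith
  nlinarith [mul_lt_mul_of_pos_right h hα₁, mul_le_mul_of_nonneg_left h1 hLi.le]

lemma endgame (α₁ α₂ α₃ : ℝ) (hα₁ : 0 < α₁) (hα₂ : 0 < α₂) (hα₃ : 0 < α₃)
    (L : Fin 6 → ℝ) (k j2 : Fin 6) (hkj : k ≠ j2)
    (hLk : L k = α₂) (hLj2 : L j2 = α₃)
    (hmin : ∀ i, α₂ ≤ L i)
    (hT : ℝ) (hh1 : α₁ ≤ hT) (hh2 : hT < 2*α₁)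
    (hGood : ∀ i, i ≠ k → α₁*α₃ < 2 * L i * hT)
    (V : ℝ) (hV : 0 < V)
    (HT HT₀ : ℝ)
    (hHT : HT = α₁*α₂*α₃/V*hT)
    (hHT0 : HT₀ = hT^2/V * sInf {x | ∃ i j : Fin 6, i ≠ j ∧ x = L i * L j}) :
    (1/2)*HT₀ < HT ∧ HT < 2*HT₀ := by
  set S : Set ℝ := {x | ∃ i j : Fin 6, i ≠ j ∧ x = L i * L j} with hS
  have hSfin : S.Finite := by
    have : S ⊆ (fun p : Fin 6 × Fin 6 => L p.1 * L p.2) '' Set.univ := by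
      rintro x ⟨i, j, hij, rfl⟩
      exact ⟨(i, j), Set.mem_univ _, rfl⟩
    exact Set.Finite.subset (Set.Finite.image _ (Set.finite_univ)) this
  have hSne : S.Nonempty := ⟨L k * L j2, k, j2, hkj, rfl⟩
  set m : ℝ := sInf S with hm
  have hmem : m ∈ S := hSne.csInf_mem hSfin
  have hmle : m ≤ α₂ * α₃ := by
    have := csInf_le hSfin.bddBelow (⟨k, j2, hkj, rfl⟩ : L k * L j2 ∈ S)
    rwa [hLk, hLj2] at this
  obtain ⟨i, j, hij, hmeq⟩ := hmem
  have hTpos : 0 < hT := lt_of_lt_of_le hα₁ hh1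
  have hmpos : 0 < m := by
    rw [hmeq]
    exact mul_pos (lt_of_lt_of_le hα₂ (hmin i)) (lt_of_lt_of_le hα₂ (hmin j))
  have K2 : α₁*α₂*α₃ < 2*m*hT := by
    have key : ∀ a b : Fin 6, b ≠ k → α₂ ≤ L a → α₁*α₂*α₃ < 2*(L a * L b)*hT := by
      intro a b hb ha
      have h1 := hGood b hb
      have hLbpos : 0 < L b := lt_of_lt_of_le hα₂ (hmin b)
      nlinarith [mul_lt_mul_of_pos_left h1 hα₂, mul_le_mul_of_nonneg_right ha
        (by positivity : (0:ℝ) ≤ 2 * L b * hT)]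
    rcases eq_or_ne j k with rfl | hj
    · have := key j i (by exact fun h => hij (h ▸ rfl)) (hmin j)
      rw [hmeq]
      calc α₁*α₂*α₃ < 2*(L j * L i)*hT := this
        _ = 2*(L i * L j)*hT := by ring
    · rw [hmeq]; exact key i j hj (hmin i)
  have K1 : hT*m < 2*(α₁*α₂*α₃) := by nlinarith [mul_le_mul_of_nonneg_left hmle hTpos.le]
  constructor
  · rw [hHT, hHT0]
    rw [show (1:ℝ)/2 * (hT^2/V*m) = (hT^2*m/2)/V by ring,
      show α₁*α₂*α₃/V*hT = (α₁*α₂*α₃*hT)/V by ring, div_lt_div_iff₀ hV hV]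
    nlinarith [mul_lt_mul_of_pos_left K1 hTpos, mul_pos hV hTpos]
  · rw [hHT, hHT0]
    rw [show (2:ℝ) * (hT^2/V*m) = (2*(hT^2*m))/V by ring,
      show α₁*α₂*α₃/V*hT = (α₁*α₂*α₃*hT)/V by ring, div_lt_div_iff₀ hV hV]
    nlinarith [mul_lt_mul_of_pos_left K2 hTpos, mul_pos hV hTpos]

set_option maxHeartbeats 2000000 in
/-- for a tetrahedron `T` in standard position (type i when `typ = true`,
type ii when `typ = false`) satisfying Condition 2, one has
`(1/2)·H_{T₀} < H_T < 2·H_{T₀}`, where `H_T = (α₁α₂α₃/|T|)·h_T` and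
`H_{T₀} = (h_T²/|T|)·min_{i≠j} |L_i||L_j|`. -/
theorem stmt_3 (α₁ α₂ α₃ s₁ t₁ s₂₁ s₂₂ t₂ : ℝ)
    (hα₁ : 0 < α₁) (hα₂ : 0 < α₂) (hα₃ : 0 < α₃)
    (h1 : s₁ ^ 2 + t₁ ^ 2 = 1) (hs₁ : 0 < s₁) (ht₁ : 0 < t₁) (hc1 : α₂ * s₁ ≤ α₁ / 2)
    (h2 : s₂₁ ^ 2 + s₂₂ ^ 2 + t₂ ^ 2 = 1) (ht₂ : 0 < t₂) (hc2 : α₃ * s₂₁ ≤ α₁ / 2) :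
    ∀ typ : Bool,
    ∀ x₁ x₂ x₃ x₄ : Euc 3,
      x₁ = 0 → x₂ = vec3 α₁ 0 0 →
      x₃ = (if typ then vec3 (α₂ * s₁) (α₂ * t₁) 0 else vec3 (α₁ - α₂ * s₁) (α₂ * t₁) 0) →
      x₄ = vec3 (α₃ * s₂₁) (α₃ * s₂₂) (α₃ * t₂) →
    ∀ L : Fin 6 → ℝ,
      L = ![dist x₁ x₂, dist x₁ x₃, dist x₁ x₄, dist x₂ x₃, dist x₂ x₄, dist x₃ x₄] →
    -- Condition 2: `α₂` is the length of the minimum edge `L_min`,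
    -- whose endpoints are `{x₁, x₃}` (type i) or `{x₂, x₃}` (type ii);
    (∀ i : Fin 6, α₂ ≤ L i) →
    α₂ = (if typ then dist x₁ x₃ else dist x₂ x₃) →
    -- `α₁ = |x₁ − x₂|` is the length of the longest edge among the four edges
    -- sharing an endpoint with `L_min`;
    (if typ then
        dist x₁ x₄ ≤ dist x₁ x₂ ∧ dist x₂ x₃ ≤ dist x₁ x₂ ∧ dist x₃ x₄ ≤ dist x₁ x₂
      else
        dist x₂ x₄ ≤ dist x₁ x₂ ∧ dist x₁ x₃ ≤ dist x₁ x₂ ∧ dist x₃ x₄ ≤ dist x₁ x₂) →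
    ∀ T : Set (Euc 3), T = convexHull ℝ {x₁, x₂, x₃, x₄} →
    ∀ hT HT HT₀ : ℝ,
      hT = Metric.diam T →
      HT = α₁ * α₂ * α₃ / (volume T).toReal * hT →
      HT₀ = hT ^ 2 / (volume T).toReal * sInf {x | ∃ i j : Fin 6, i ≠ j ∧ x = L i * L j} →
      (1 / 2) * HT₀ < HT ∧ HT < 2 * HT₀ := by
  intro typ x₁ x₂ x₃ x₄ hx1 hx2 hx3 hx4 L hL hmin heq hcond T hTdef hT HT HT₀ hhT hHT hHT0
  -- generic distance facts
  have e12 : dist x₁ x₂ = α₁ := by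
    rw [hx1, hx2, euc_zero, dist_vec3,
      show ((0:ℝ)-α₁)^2+((0:ℝ)-0)^2+((0:ℝ)-0)^2 = α₁^2 by ring, Real.sqrt_sq hα₁.le]
  have e14 : dist x₁ x₄ = α₃ := by
    rw [hx1, hx4, euc_zero, dist_vec3,
      show ((0:ℝ)-α₃*s₂₁)^2+((0:ℝ)-α₃*s₂₂)^2+((0:ℝ)-α₃*t₂)^2 = α₃^2 by
        linear_combination α₃^2 * h2, Real.sqrt_sq hα₃.le]
  have s24 : (dist x₂ x₄)^2 = (α₁-α₃*s₂₁)^2 + (α₃*s₂₂)^2 + (α₃*t₂)^2 := by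
    rw [hx2, hx4, sq_dist_vec3]; ring
  have hL0 : L 0 = dist x₁ x₂ := by rw [hL]; rfl
  have hL1 : L 1 = dist x₁ x₃ := by rw [hL]; rfl
  have hL2 : L 2 = dist x₁ x₄ := by rw [hL]; rfl
  have hL3 : L 3 = dist x₂ x₃ := by rw [hL]; rfl
  have hL4 : L 4 = dist x₂ x₄ := by rw [hL]; rfl
  have hL5 : L 5 = dist x₃ x₄ := by rw [hL]; rfl
  have hmin5 : α₂ ≤ dist x₃ x₄ := hL5 ▸ hmin 5
  have hα2α1 : α₂ ≤ α₁ := by have := hmin 0; rw [hL0, e12] at this; exact this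
  have hTpos0 : 0 < α₁ := hα₁
  -- boundedness & membership
  have hbd : Bornology.IsBounded T := by
    rw [hTdef]; exact ((Set.toFinite _).isCompact_convexHull ℝ).isBounded
  have hsub : ({x₁, x₂, x₃, x₄} : Set (Euc 3)) ⊆ T := hTdef ▸ subset_convexHull ℝ _
  have hh1 : α₁ ≤ hT := by
    rw [hhT, ← e12]
    exact Metric.dist_le_diam_of_mem hbd (hsub (by simp)) (hsub (by simp))
  have hh3 : α₃ ≤ hT := by
    rw [hhT, ← e14]
    exact Metric.dist_le_diam_of_mem hbd (hsub (by simp)) (hsub (by simp))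
  have hTpos : 0 < hT := lt_of_lt_of_le hα₁ hh1
  -- key24 : α₁ < 2 * dist x₂ x₄  (shared)
  have key24 : α₁ < 2 * dist x₂ x₄ :=
    aux_half_lt α₁ (dist x₂ x₄) (α₁-α₃*s₂₁) (α₃*s₂₂) (α₃*t₂) hα₁ dist_nonneg
      (by linarith) (ne_of_gt (mul_pos hα₃ ht₂)) s24
  -- diam ≤ cmax machinery
  set cmax : ℝ := max (max (max (dist x₁ x₂) (dist x₁ x₃)) (max (dist x₁ x₄) (dist x₂ x₃)))
    (max (dist x₂ x₄) (dist x₃ x₄)) with hcmax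
  have b12 : dist x₁ x₂ ≤ cmax := by
    rw [hcmax]; exact le_trans (le_trans (le_max_left _ _) (le_max_left _ _)) (le_max_left _ _)
  have b13 : dist x₁ x₃ ≤ cmax := by
    rw [hcmax]; exact le_trans (le_trans (le_max_right _ _) (le_max_left _ _)) (le_max_left _ _)
  have b14 : dist x₁ x₄ ≤ cmax := by
    rw [hcmax]; exact le_trans (le_trans (le_max_left _ _) (le_max_right _ _)) (le_max_left _ _)
  have b23 : dist x₂ x₃ ≤ cmax := by
    rw [hcmax]; exact le_trans (le_trans (le_max_right _ _) (le_max_right _ _)) (le_max_left _ _)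
  have b24 : dist x₂ x₄ ≤ cmax := by
    rw [hcmax]; exact le_trans (le_max_left _ _) (le_max_right _ _)
  have b34 : dist x₃ x₄ ≤ cmax := by
    rw [hcmax]; exact le_trans (le_max_right _ _) (le_max_right _ _)
  have hc0 : 0 ≤ cmax := le_trans dist_nonneg b12
  have hTle : hT ≤ cmax := by
    rw [hhT, hTdef, convexHull_diam]
    apply Metric.diam_le_of_forall_dist_le hc0
    intro p hp q hq
    simp only [Set.mem_insert_iff, Set.mem_singleton_iff] at hp hq
    rcases hp with h|h|h|h <;> rcases hq with h'|h'|h'|h' <;> rw [h, h'] <;>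
      (try simp only [dist_self, dist_comm x₂ x₁, dist_comm x₃ x₁, dist_comm x₄ x₁,
        dist_comm x₃ x₂, dist_comm x₄ x₂, dist_comm x₄ x₃]) <;>
      first
        | exact hc0
        | exact b12
        | exact b13
        | exact b14
        | exact b23
        | exact b24
        | exact b34
  -- split on type
  cases typ
  · -- type ii
    simp only [Bool.false_eq_true, if_false] at hx3 heq hcond
    obtain ⟨hc24, hc13, hc34⟩ := hcond
    have s13 : (dist x₁ x₃)^2 = (α₁-α₂*s₁)^2 + (α₂*t₁)^2 := by
      rw [hx1, hx3, euc_zero, sq_dist_vec3]; ring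
    have s34 : (dist x₃ x₄)^2 = (α₁-α₂*s₁-α₃*s₂₁)^2 + (α₂*t₁-α₃*s₂₂)^2 + (α₃*t₂)^2 := by
      rw [hx3, hx4, sq_dist_vec3]; ring
    -- key13 : α₁ < 2 * dist x₁ x₃
    have key13 : α₁ < 2 * dist x₁ x₃ :=
      aux_half_lt α₁ (dist x₁ x₃) (α₁-α₂*s₁) 0 (α₂*t₁) hα₁ dist_nonneg
        (by linarith) (ne_of_gt (mul_pos hα₂ ht₁)) (by rw [s13]; ring)
    -- key34 : α₃ < 2 * dist x₃ x₄
    have key34 : α₃ < 2 * dist x₃ x₄ :=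
      aux_key34ii α₁ α₂ α₃ s₁ t₁ s₂₁ s₂₂ t₂ (dist x₃ x₄) hα₁ hα₂ hα₃ h1 h2 ht₂ hc2 hmin5 s34
    -- hT < 2α₁
    have hh2 : hT < 2*α₁ := by
      apply lt_of_le_of_lt hTle
      rw [hcmax]
      have l12 : dist x₁ x₂ < 2*α₁ := by rw [e12]; linarith
      have l13 : dist x₁ x₃ < 2*α₁ := by rw [e12] at hc13; linarith
      have l14 : dist x₁ x₄ < 2*α₁ := by
        rw [e14]; rw [e12] at hc34; linarith [key34]
      have l23 : dist x₂ x₃ < 2*α₁ := by rw [← heq]; linarith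
      have l24 : dist x₂ x₄ < 2*α₁ := by rw [e12] at hc24; linarith
      have l34 : dist x₃ x₄ < 2*α₁ := by rw [e12] at hc34; linarith
      exact max_lt (max_lt (max_lt l12 l13) (max_lt l14 l23)) (max_lt l24 l34)
    -- Good
    have hGood : ∀ i : Fin 6, i ≠ (3 : Fin 6) → α₁*α₃ < 2 * L i * hT := by
      intro i hi
      fin_cases i
      · show α₁*α₃ < 2 * L 0 * hT
        rw [hL0, e12]; exact aux_good1 α₁ α₃ α₁ hT (by linarith) hh3 hα₁ hα₃ hTpos
      · show α₁*α₃ < 2 * L 1 * hT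
        rw [hL1]; exact aux_good1 α₁ α₃ _ hT key13 hh3 hα₁ hα₃ hTpos
      · show α₁*α₃ < 2 * L 2 * hT
        rw [hL2, e14]; exact aux_good2 α₁ α₃ α₃ hT (by linarith) hh1 hα₁ hα₃ hTpos
      · exact absurd rfl hi
      · show α₁*α₃ < 2 * L 4 * hT
        rw [hL4]; exact aux_good1 α₁ α₃ _ hT key24 hh3 hα₁ hα₃ hTpos
      · show α₁*α₃ < 2 * L 5 * hT
        rw [hL5]; exact aux_good2 α₁ α₃ _ hT key34 hh1 hα₁ hα₃ hTpos
    -- volume positivity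
    have hV : 0 < (volume T).toReal := by
      rw [hTdef, hx1, hx2, hx3, hx4, euc_zero]
      exact vol_pos α₁ (α₁ - α₂*s₁) (α₂*t₁) (α₃*s₂₁) (α₃*s₂₂) (α₃*t₂)
        (ne_of_gt hα₁) (ne_of_gt (mul_pos hα₂ ht₁)) (ne_of_gt (mul_pos hα₃ ht₂))
    have hLk : L 3 = α₂ := by rw [hL3, ← heq]
    have hLj2 : L 2 = α₃ := by rw [hL2, e14]
    exact endgame α₁ α₂ α₃ hα₁ hα₂ hα₃ L 3 2 (by decide) hLk hLj2 hmin hT hh1 hh2 hGood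
      _ hV HT HT₀ hHT hHT0
  · -- type i
    simp only [if_true] at hx3 heq hcond
    obtain ⟨hc14, hc23, hc34⟩ := hcond
    have s23 : (dist x₂ x₃)^2 = (α₁-α₂*s₁)^2 + (α₂*t₁)^2 := by
      rw [hx2, hx3, sq_dist_vec3]; ring
    have s34 : (dist x₃ x₄)^2 = (α₂*s₁-α₃*s₂₁)^2 + (α₂*t₁-α₃*s₂₂)^2 + (α₃*t₂)^2 := by
      rw [hx3, hx4, sq_dist_vec3]; ring
    have key23 : α₁ < 2 * dist x₂ x₃ :=
      aux_half_lt α₁ (dist x₂ x₃) (α₁-α₂*s₁) 0 (α₂*t₁) hα₁ dist_nonneg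
        (by linarith) (ne_of_gt (mul_pos hα₂ ht₁)) (by rw [s23]; ring)
    have key34 : α₃ < 2 * dist x₃ x₄ :=
      aux_key34i α₂ α₃ s₁ t₁ s₂₁ s₂₂ t₂ (dist x₃ x₄) hα₂ hα₃ h1 h2 ht₂ hmin5 s34
    have hα3α1 : α₃ ≤ α₁ := by rw [e14, e12] at hc14; exact hc14
    have hh2 : hT < 2*α₁ := by
      apply lt_of_le_of_lt hTle
      rw [hcmax]
      have l12 : dist x₁ x₂ < 2*α₁ := by rw [e12]; linarith
      have l13 : dist x₁ x₃ < 2*α₁ := by rw [← heq]; linarith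
      have l14 : dist x₁ x₄ < 2*α₁ := by rw [e14]; linarith
      have l23 : dist x₂ x₃ < 2*α₁ := by rw [e12] at hc23; linarith
      have l24 : dist x₂ x₄ < 2*α₁ :=
        aux_lt_two α₁ α₃ s₂₁ s₂₂ t₂ (dist x₂ x₄) hα₁ hα₃ h2 ht₂ hα3α1 dist_nonneg s24
      have l34 : dist x₃ x₄ < 2*α₁ := by rw [e12] at hc34; linarith
      exact max_lt (max_lt (max_lt l12 l13) (max_lt l14 l23)) (max_lt l24 l34)
    have hGood : ∀ i : Fin 6, i ≠ (1 : Fin 6) → α₁*α₃ < 2 * L i * hT := by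
      intro i hi
      fin_cases i
      · show α₁*α₃ < 2 * L 0 * hT
        rw [hL0, e12]; exact aux_good1 α₁ α₃ α₁ hT (by linarith) hh3 hα₁ hα₃ hTpos
      · exact absurd rfl hi
      · show α₁*α₃ < 2 * L 2 * hT
        rw [hL2, e14]; exact aux_good2 α₁ α₃ α₃ hT (by linarith) hh1 hα₁ hα₃ hTpos
      · show α₁*α₃ < 2 * L 3 * hT
        rw [hL3]; exact aux_good1 α₁ α₃ _ hT key23 hh3 hα₁ hα₃ hTpos
      · show α₁*α₃ < 2 * L 4 * hT
        rw [hL4]; exact aux_good1 α₁ α₃ _ hT key24 hh3 hα₁ hα₃ hTpos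
      · show α₁*α₃ < 2 * L 5 * hT
        rw [hL5]; exact aux_good2 α₁ α₃ _ hT key34 hh1 hα₁ hα₃ hTpos
    have hV : 0 < (volume T).toReal := by
      rw [hTdef, hx1, hx2, hx3, hx4, euc_zero]
      exact vol_pos α₁ (α₂*s₁) (α₂*t₁) (α₃*s₂₁) (α₃*s₂₂) (α₃*t₂)
        (ne_of_gt hα₁) (ne_of_gt (mul_pos hα₂ ht₁)) (ne_of_gt (mul_pos hα₃ ht₂))
    have hLk : L 1 = α₂ := by rw [hL1, ← heq]
    have hLj2 : L 2 = α₃ := by rw [hL2, e14]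
    exact endgame α₁ α₂ α₃ hα₁ hα₂ hα₃ L 1 2 (by decide) hLk hLj2 hmin hT hh1 hh2 hGood
      _ hV HT HT₀ hHT hHT0
end
end

section
/- For every nondegenerate triangle T₀ in the Euclidean plane, the quantity H_{T₀} is equivalent to the circumradius R₂ of T₀; explicitly, 4·R₂ ≤ H_{T₀} ≤ 8·R₂. -/
open MeasureTheory ENNReal

noncomputable section

namespace Stmt4Aux

open Set

theorem vol_std : volume (regionBetween (fun _ => (0:ℝ)) (fun x => 1 - x) (Icc 0 1))
      = ENNReal.ofReal (1/2) := by
  have hint : IntegrableOn (fun x : ℝ => 1 - x) (Icc 0 1) := by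
    exact (continuous_const.sub continuous_id).integrableOn_Icc
  have h0 : IntegrableOn (fun _ : ℝ => (0:ℝ)) (Icc 0 1) :=
    integrableOn_const measure_Icc_lt_top.ne
  rw [Measure.volume_eq_prod,
    volume_regionBetween_eq_integral h0 hint
    measurableSet_Icc (fun x hx => by simpa using hx.2)]
  congr 1
  simp only [Pi.sub_apply, sub_zero]
  rw [MeasureTheory.integral_Icc_eq_integral_Ioc, ← intervalIntegral.integral_of_le zero_le_one]
  rw [intervalIntegral.integral_sub intervalIntegrable_const
    intervalIntegral.intervalIntegrable_id]
  simp
  norm_num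

theorem vol_T2 : volume {p : ℝ × ℝ | 0 ≤ p.1 ∧ 0 ≤ p.2 ∧ p.1 + p.2 ≤ 1} = ENNReal.ofReal (1/2) := by
  set R := regionBetween (fun _ => (0:ℝ)) (fun x => 1 - x) (Icc 0 1) with hRdef
  have hG : volume {p : ℝ × ℝ | p.2 = 1 - p.1} = 0 := by
    have hmeas : MeasurableSet {p : ℝ × ℝ | p.2 = 1 - p.1} := by
      have h1 : {p : ℝ × ℝ | p.2 = 1 - p.1} = (fun p : ℝ × ℝ => p.2 - (1 - p.1)) ⁻¹' {0} := by
        ext p; simp [sub_eq_zero]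
      rw [h1]
      exact (by continuity : Continuous fun p : ℝ × ℝ => p.2 - (1 - p.1)).measurable
        (measurableSet_singleton (0:ℝ))
    rw [Measure.volume_eq_prod, Measure.prod_apply hmeas]
    have : ∀ x : ℝ, volume (Prod.mk x ⁻¹' {p : ℝ × ℝ | p.2 = 1 - p.1}) = 0 := by
      intro x
      have : (Prod.mk x ⁻¹' {p : ℝ × ℝ | p.2 = 1 - p.1}) = {1 - x} := by
        ext y; simp [eq_comm]
      rw [this]; simp
    simp [this]
  have hG0 : volume {p : ℝ × ℝ | p.2 = 0} = 0 := by
    have hmeas : MeasurableSet {p : ℝ × ℝ | p.2 = 0} := by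
      have h1 : {p : ℝ × ℝ | p.2 = 0} = (Prod.snd : ℝ × ℝ → ℝ) ⁻¹' {0} := by ext p; simp
      rw [h1]; exact measurable_snd (measurableSet_singleton (0:ℝ))
    rw [Measure.volume_eq_prod, Measure.prod_apply hmeas]
    have : ∀ x : ℝ, volume (Prod.mk x ⁻¹' {p : ℝ × ℝ | p.2 = 0}) = 0 := by
      intro x
      have : (Prod.mk x ⁻¹' {p : ℝ × ℝ | p.2 = 0}) = {0} := by ext y; simp
      rw [this]; simp
    simp [this]
  have hsub1 : R ⊆ {p : ℝ × ℝ | 0 ≤ p.1 ∧ 0 ≤ p.2 ∧ p.1 + p.2 ≤ 1} := by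
    rintro ⟨x, y⟩ ⟨hx, hy⟩
    simp only [Set.mem_Icc, Set.mem_Ioo] at hx hy
    exact ⟨hx.1, hy.1.le, by linarith [hy.2]⟩
  have hsub2 : {p : ℝ × ℝ | 0 ≤ p.1 ∧ 0 ≤ p.2 ∧ p.1 + p.2 ≤ 1} ⊆
      R ∪ ({p : ℝ × ℝ | p.2 = 0} ∪ {p : ℝ × ℝ | p.2 = 1 - p.1}) := by
    rintro ⟨x, y⟩ ⟨hx, hy, hxy⟩
    rcases eq_or_lt_of_le hy with h | h
    · exact Or.inr (Or.inl h.symm)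
    rcases eq_or_lt_of_le (show y ≤ 1 - x by linarith) with h2 | h2
    · exact Or.inr (Or.inr h2)
    · exact Or.inl ⟨⟨hx, by linarith⟩, h, h2⟩
  refine le_antisymm ?_ ?_
  · calc volume {p : ℝ × ℝ | 0 ≤ p.1 ∧ 0 ≤ p.2 ∧ p.1 + p.2 ≤ 1}
        ≤ volume (R ∪ ({p : ℝ × ℝ | p.2 = 0} ∪ {p : ℝ × ℝ | p.2 = 1 - p.1})) :=
          measure_mono hsub2
      _ ≤ volume R + volume ({p : ℝ × ℝ | p.2 = 0} ∪ {p : ℝ × ℝ | p.2 = 1 - p.1}) :=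
          measure_union_le _ _
      _ ≤ volume R + (volume {p : ℝ × ℝ | p.2 = 0} + volume {p : ℝ × ℝ | p.2 = 1 - p.1}) :=
          add_le_add le_rfl (measure_union_le _ _)
      _ = ENNReal.ofReal (1/2) := by rw [hG, hG0, vol_std]; simp
  · rw [← vol_std]; exact measure_mono hsub1

theorem vol_TE : volume {x : Euc 2 | 0 ≤ x 0 ∧ 0 ≤ x 1 ∧ x 0 + x 1 ≤ 1} = ENNReal.ofReal (1/2) := by
  have h1 := EuclideanSpace.volume_preserving_symm_measurableEquiv_toLp (Fin 2)
  have h2 := MeasureTheory.volume_preserving_finTwoArrow ℝ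
  have hmeas : MeasurableSet {p : ℝ × ℝ | 0 ≤ p.1 ∧ 0 ≤ p.2 ∧ p.1 + p.2 ≤ 1} := by
    apply MeasurableSet.inter
    · exact measurableSet_le measurable_const measurable_fst
    apply MeasurableSet.inter
    · exact measurableSet_le measurable_const measurable_snd
    · exact measurableSet_le (measurable_fst.add measurable_snd) measurable_const
  have e2 : volume {x : Fin 2 → ℝ | 0 ≤ x 0 ∧ 0 ≤ x 1 ∧ x 0 + x 1 ≤ 1} = ENNReal.ofReal (1/2) := by
    rw [← vol_T2]
    have : {x : Fin 2 → ℝ | 0 ≤ x 0 ∧ 0 ≤ x 1 ∧ x 0 + x 1 ≤ 1}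
        = MeasurableEquiv.finTwoArrow ⁻¹' {p : ℝ × ℝ | 0 ≤ p.1 ∧ 0 ≤ p.2 ∧ p.1 + p.2 ≤ 1} := by
      ext x; simp [MeasurableEquiv.finTwoArrow]
    rw [this]
    exact h2.measure_preimage hmeas.nullMeasurableSet
  rw [← e2]
  have : {x : Euc 2 | 0 ≤ x 0 ∧ 0 ≤ x 1 ∧ x 0 + x 1 ≤ 1}
      = (MeasurableEquiv.toLp 2 (Fin 2 → ℝ)).symm ⁻¹'
        {x : Fin 2 → ℝ | 0 ≤ x 0 ∧ 0 ≤ x 1 ∧ x 0 + x 1 ≤ 1} := by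
    rfl
  rw [this]
  apply h1.measure_preimage
  apply MeasurableSet.nullMeasurableSet
  apply MeasurableSet.inter
  · exact measurableSet_le measurable_const (measurable_pi_apply 0)
  apply MeasurableSet.inter
  · exact measurableSet_le measurable_const (measurable_pi_apply 1)
  · exact measurableSet_le ((measurable_pi_apply 0).add (measurable_pi_apply 1)) measurable_const

theorem hull_eq : convexHull ℝ {(0 : Euc 2), EuclideanSpace.single 0 1, EuclideanSpace.single 1 1}
    = {x : Euc 2 | 0 ≤ x 0 ∧ 0 ≤ x 1 ∧ x 0 + x 1 ≤ 1} := by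
  apply le_antisymm
  · apply convexHull_min
    · rintro x hx
      rcases hx with rfl | rfl | rfl <;>
        simp [EuclideanSpace.single_apply]
    · have l0 : IsLinearMap ℝ (fun x : Euc 2 => x 0) := ⟨fun a b => rfl, fun c a => rfl⟩
      have l1 : IsLinearMap ℝ (fun x : Euc 2 => x 1) := ⟨fun a b => rfl, fun c a => rfl⟩
      have lsum : IsLinearMap ℝ (fun x : Euc 2 => x 0 + x 1) :=
        ⟨fun a b => by show (a+b) 0 + (a+b) 1 = _; simp [PiLp.add_apply]; ring,
         fun c a => by show (c • a) 0 + (c • a) 1 = _; simp [PiLp.smul_apply]; ring⟩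
      have : {x : Euc 2 | 0 ≤ x 0 ∧ 0 ≤ x 1 ∧ x 0 + x 1 ≤ 1}
          = {x : Euc 2 | 0 ≤ x 0} ∩ ({x : Euc 2 | 0 ≤ x 1} ∩ {x : Euc 2 | x 0 + x 1 ≤ 1}) := by
        ext x; simp [and_assoc]
      rw [this]
      exact (convex_halfSpace_ge l0 0).inter
        ((convex_halfSpace_ge l1 0).inter (convex_halfSpace_le lsum 1))
  · rintro x ⟨h0, h1, hs⟩
    have := Finset.centerMass_mem_convexHull (Finset.univ : Finset (Fin 3))
      (w := ![1 - x 0 - x 1, x 0, x 1])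
      (z := ![(0 : Euc 2), EuclideanSpace.single 0 1, EuclideanSpace.single 1 1])
      (s := {(0 : Euc 2), EuclideanSpace.single 0 1, EuclideanSpace.single 1 1})
      (by intro i _; fin_cases i <;> simp <;> linarith)
      (by simp [Fin.sum_univ_three]; linarith)
      (by intro i _; fin_cases i <;> simp)
    convert this using 1
    rw [Finset.centerMass]
    have hw : ∑ i : Fin 3, (![1 - x 0 - x 1, x 0, x 1]) i = 1 := by
      simp [Fin.sum_univ_three]; ring
    rw [hw, inv_one, one_smul]
    simp [Fin.sum_univ_three]
    ext i
    fin_cases i <;> simp [EuclideanSpace.single_apply, PiLp.add_apply, PiLp.smul_apply]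

/-- volume of the triangle with vertices `0`, `u`, `v`. -/
theorem vol_hull0 (u v : Euc 2) : volume (convexHull ℝ {(0 : Euc 2), u, v})
    = ENNReal.ofReal (|(EuclideanSpace.basisFun (Fin 2) ℝ).toBasis.det ![u, v]| / 2) := by
  set b := (EuclideanSpace.basisFun (Fin 2) ℝ).toBasis with hb
  set L : Euc 2 →ₗ[ℝ] Euc 2 := b.constr ℝ ![u, v] with hL
  have hdet : LinearMap.det L = b.det ![u, v] := by
    rw [Module.Basis.det_apply, Module.Basis.toMatrix_eq_toMatrix_constr, LinearMap.det_toMatrix]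
    congr 1
  have hLim : L '' {(0 : Euc 2), EuclideanSpace.single 0 1, EuclideanSpace.single 1 1}
      = {(0 : Euc 2), u, v} := by
    have h0 : L 0 = 0 := map_zero L
    have h1 : L (EuclideanSpace.single 0 1) = u := by
      rw [show (EuclideanSpace.single (0 : Fin 2) (1:ℝ)) = b 0 by
        rw [hb, OrthonormalBasis.coe_toBasis, EuclideanSpace.basisFun_apply]]
      rw [hL, Module.Basis.constr_basis]
      rfl
    have h2 : L (EuclideanSpace.single 1 1) = v := by
      rw [show (EuclideanSpace.single (1 : Fin 2) (1:ℝ)) = b 1 by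
        rw [hb, OrthonormalBasis.coe_toBasis, EuclideanSpace.basisFun_apply]]
      rw [hL, Module.Basis.constr_basis]
      rfl
    rw [Set.image_insert_eq, Set.image_insert_eq, Set.image_singleton, h0, h1, h2]
  have : convexHull ℝ {(0 : Euc 2), u, v}
      = L '' convexHull ℝ {(0 : Euc 2), EuclideanSpace.single 0 1, EuclideanSpace.single 1 1} := by
    rw [L.image_convexHull, hLim]
  rw [this, Measure.addHaar_image_linearMap, hull_eq, vol_TE, hdet,
    ← ENNReal.ofReal_mul (abs_nonneg _), mul_one_div]

theorem vol_tri (A B C : Euc 2) : volume (convexHull ℝ {A, B, C})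
    = ENNReal.ofReal (|(EuclideanSpace.basisFun (Fin 2) ℝ).toBasis.det ![B - A, C - A]| / 2) := by
  have him : {A, B, C} = (fun x : Euc 2 => A + x) '' {0, B - A, C - A} := by
    rw [Set.image_insert_eq, Set.image_insert_eq, Set.image_singleton]
    simp
  have hmap : convexHull ℝ {A, B, C} = (fun x : Euc 2 => A + x) '' convexHull ℝ {0, B - A, C - A} := by
    rw [him]
    exact ((AffineEquiv.constVAdd ℝ (Euc 2) A).toAffineMap.image_convexHull _).symm
  rw [hmap, ← vol_hull0 (B - A) (C - A)]
  have himg : (fun x : Euc 2 => A + x) '' convexHull ℝ {0, B - A, C - A}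
      = (fun x : Euc 2 => -A + x) ⁻¹' convexHull ℝ {0, B - A, C - A} := by
    ext x
    constructor
    · rintro ⟨y, hy, rfl⟩
      simpa [neg_add_cancel_left] using hy
    · intro hx
      exact ⟨-A + x, hx, by simp⟩
  rw [himg, measure_preimage_add]

/-- pure arithmetic sub-lemma for an ordered triangle. -/
theorem arith_sub (m mid M R area : ℝ) (hm : 0 < m) (h1 : m ≤ mid) (h2 : mid ≤ M)
    (htri : M ≤ m + mid) (hR : 0 < R) (harea : 0 < area)
    (hkey : m * mid * M = 4 * R * area) :
    4 * R ≤ M ^ 2 / area * m ∧ M ^ 2 / area * m ≤ 8 * R := by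
  have hmid : 0 < mid := lt_of_lt_of_le hm h1
  have hM : 0 < M := lt_of_lt_of_le hmid h2
  have hH : M ^ 2 / area * m = 4 * R * (M / mid) := by
    field_simp
    nlinarith [hkey]
  rw [hH]
  constructor
  · have : (1:ℝ) ≤ M / mid := (one_le_div hmid).2 h2
    nlinarith
  · have : M / mid ≤ 2 := by
      rw [div_le_iff₀ hmid]
      linarith
    nlinarith

theorem arith (a b c R area : ℝ) (ha : 0 < a) (hb : 0 < b) (hc : 0 < c) (hR : 0 < R)
    (harea : 0 < area) (t1 : c ≤ a + b) (t2 : b ≤ a + c) (t3 : a ≤ b + c)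
    (hkey : a * b * c = 4 * R * area) :
    4 * R ≤ (max a (max b c)) ^ 2 / area * min a (min b c) ∧
      (max a (max b c)) ^ 2 / area * min a (min b c) ≤ 8 * R := by
  rcases le_total a b with hab | hab
  · rcases le_total b c with hbc | hcb
    · rw [max_eq_right hbc, max_eq_right (hab.trans hbc), min_eq_left hbc, min_eq_left hab]
      exact arith_sub a b c R area ha hab hbc (by linarith) hR harea (by linear_combination hkey)
    · rcases le_total a c with hac | hca
      · rw [max_eq_left hcb, max_eq_right hab, min_eq_right hcb, min_eq_left hac]
        exact arith_sub a c b R area ha hac hcb (by linarith) hR harea (by linear_combination hkey)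
      · rw [max_eq_left hcb, max_eq_right hab, min_eq_right hcb, min_eq_right hca]
        exact arith_sub c a b R area hc hca hab (by linarith) hR harea (by linear_combination hkey)
  · rcases le_total b c with hbc | hcb
    · rcases le_total a c with hac | hca
      · rw [max_eq_right hbc, max_eq_right hac, min_eq_left hbc, min_eq_right hab]
        exact arith_sub b a c R area hb hab hac (by linarith) hR harea (by linear_combination hkey)
      · rw [max_eq_right hbc, max_eq_left hca, min_eq_left hbc, min_eq_right hab]
        exact arith_sub b c a R area hb hbc hca (by linarith) hR harea (by linear_combination hkey)
    · rw [max_eq_left hcb, max_eq_left hab, min_eq_right hcb,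
        min_eq_right (hcb.trans hab)]
      exact arith_sub c b a R area hc hcb hab (by linarith) hR harea (by linear_combination hkey)

end Stmt4Aux

/-- for every nondegenerate triangle `T₀` in the Euclidean plane, with
`h_{T₀}` the longest edge length, `|T₀|` the area, and
`H_{T₀} = (h_{T₀}²/|T₀|)·min_i |L_i|`, the quantity `H_{T₀}` is equivalent to the
circumradius `R₂`: explicitly `4·R₂ ≤ H_{T₀} ≤ 8·R₂`. -/
theorem stmt_4 (A B C : Euc 2) (hind : AffineIndependent ℝ ![A, B, C]) :
    ∀ hT₀ HT₀ R₂ : ℝ,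
      hT₀ = max (dist A B) (max (dist A C) (dist B C)) →
      HT₀ = hT₀ ^ 2 / (volume (convexHull ℝ {A, B, C})).toReal *
        min (dist A B) (min (dist A C) (dist B C)) →
      R₂ = (⟨![A, B, C], hind⟩ : Affine.Simplex ℝ (Euc 2) 2).circumradius →
      4 * R₂ ≤ HT₀ ∧ HT₀ ≤ 8 * R₂ := by
  intro hT₀ HT₀ R₂ hh hH hR
  letI : Fact (Module.finrank ℝ (Euc 2) = 2) := ⟨finrank_euclideanSpace_fin⟩
  letI : Module.Oriented ℝ (Euc 2) (Fin 2) :=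
    ⟨Module.Basis.orientation ((EuclideanSpace.basisFun (Fin 2) ℝ).toBasis)⟩
  set o : Orientation ℝ (Euc 2) (Fin 2) := Module.Oriented.positiveOrientation with ho
  set t : Affine.Triangle ℝ (Euc 2) := ⟨![A, B, C], hind⟩ with ht
  -- distinct vertices
  have hAB : A ≠ B := fun h =>
    absurd (hind.injective (show ![A, B, C] 0 = ![A, B, C] 1 by simpa using h)) (by decide)
  have hAC : A ≠ C := fun h =>
    absurd (hind.injective (show ![A, B, C] 0 = ![A, B, C] 2 by simpa using h)) (by decide)
  have hBC : B ≠ C := fun h =>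
    absurd (hind.injective (show ![A, B, C] 1 = ![A, B, C] 2 by simpa using h)) (by decide)
  have ha : 0 < dist A B := dist_pos.2 hAB
  have hb : 0 < dist A C := dist_pos.2 hAC
  have hc : 0 < dist B C := dist_pos.2 hBC
  -- circumradius positive
  have hRpos : 0 < R₂ := by
    rcases ((t.circumradius_nonneg).eq_or_lt.imp_left Eq.symm) with h0 | h0
    · exfalso
      have d0 : dist (t.points 0) t.circumcenter = t.circumradius :=
        t.dist_circumcenter_eq_circumradius 0
      have d1 : dist (t.points 1) t.circumcenter = t.circumradius :=
        t.dist_circumcenter_eq_circumradius 1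
      rw [h0] at d0 d1
      have e0 : t.points 0 = t.circumcenter := by rwa [dist_eq_zero] at d0
      have e1 : t.points 1 = t.circumcenter := by rwa [dist_eq_zero] at d1
      exact hAB (show A = B from e0.trans e1.symm)
    · rwa [hR]
  -- law of sines
  have law := Affine.Triangle.dist_div_sin_oangle_eq_two_mul_circumradius t
    (i₁ := 1) (i₂ := 0) (i₃ := 2) (by decide) (by decide) (by decide)
  have hpts : t.points = ![A, B, C] := rfl
  rw [hpts] at law
  simp only [Matrix.cons_val_zero, Matrix.cons_val_one, Matrix.head_cons,
    Matrix.cons_val_two, Matrix.tail_cons] at law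
  rw [← hR] at law
  -- the determinant
  set D : ℝ := (EuclideanSpace.basisFun (Fin 2) ℝ).toBasis.det ![B - A, C - A] with hD
  have hoangle : EuclideanGeometry.oangle B A C = o.oangle (B - A) (C - A) := by
    rw [EuclideanGeometry.oangle]
    norm_num [vsub_eq_sub]
    rfl
  have hdetf : ∀ u v : Euc 2, o.areaForm u v
      = (EuclideanSpace.basisFun (Fin 2) ℝ).toBasis.det ![u, v] := by
    intro u v
    rw [o.areaForm_to_volumeForm, o.volumeForm_robust (EuclideanSpace.basisFun (Fin 2) ℝ) rfl]
  have hsinf : ∀ u v : Euc 2, Real.Angle.sin (o.oangle u v) = o.areaForm u v / (‖u‖ * ‖v‖) := by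
    intro u v
    rw [Orientation.oangle, Real.Angle.sin_coe, Complex.sin_arg, o.norm_kahler]
    congr 1
    simp [Orientation.kahler_apply_apply]
  have hsin : Real.Angle.sin (o.oangle (B - A) (C - A)) = D / (‖B - A‖ * ‖C - A‖) := by
    rw [hsinf, hdetf, hD]
  have hnu : ‖B - A‖ = dist A B := by rw [dist_comm, dist_eq_norm]
  have hnv : ‖C - A‖ = dist A C := by rw [dist_comm, dist_eq_norm]
  have hnu0 : ‖B - A‖ ≠ 0 := by rw [hnu]; exact ne_of_gt ha
  have hnv0 : ‖C - A‖ ≠ 0 := by rw [hnv]; exact ne_of_gt hb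
  rw [hoangle, hsin] at law
  -- D ≠ 0
  have hD0 : D ≠ 0 := by
    intro h
    rw [h, zero_div, abs_zero, _root_.div_zero] at law
    linarith
  -- area
  have harea : (volume (convexHull ℝ {A, B, C})).toReal = |D| / 2 := by
    rw [Stmt4Aux.vol_tri A B C, ← hD, ENNReal.toReal_ofReal (by positivity)]
  have hareapos : 0 < (volume (convexHull ℝ {A, B, C})).toReal := by
    rw [harea]
    have : 0 < |D| := abs_pos.2 hD0
    linarith
  -- key identity : a * b * c = 4 * R₂ * area
  have habs : |D / (‖B - A‖ * ‖C - A‖)| = |D| / (‖B - A‖ * ‖C - A‖) := by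
    rw [abs_div, abs_of_nonneg (by positivity : (0:ℝ) ≤ ‖B - A‖ * ‖C - A‖)]
  rw [habs] at law
  have hkey : dist A B * dist A C * dist B C = 4 * R₂ * ((volume (convexHull ℝ {A, B, C})).toReal) := by
    rw [harea, ← hnu, ← hnv]
    have habs0 : |D| ≠ 0 := fun h => hD0 (abs_eq_zero.1 h)
    rw [div_div_eq_mul_div, div_eq_iff habs0] at law
    linear_combination law
  -- triangle inequalities
  have t1 : dist B C ≤ dist A B + dist A C := by
    calc dist B C ≤ dist B A + dist A C := dist_triangle B A C
      _ = dist A B + dist A C := by rw [dist_comm B A]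
  have t2 : dist A C ≤ dist A B + dist B C := dist_triangle A B C
  have t3 : dist A B ≤ dist A C + dist B C := by
    calc dist A B ≤ dist A C + dist C B := dist_triangle A C B
      _ = dist A C + dist B C := by rw [dist_comm C B]
  have main := Stmt4Aux.arith (dist A B) (dist A C) (dist B C) R₂
    ((volume (convexHull ℝ {A, B, C})).toReal) ha hb hc hRpos hareapos t1 t2 t3 hkey
  rw [hH, hh]
  exact main
end
end

section
/- For every γ₁ with 0 < γ₁ < π there exists γ₀ > 0 such that every nondegenerate triangle T₀ in the Euclidean plane whose maximum interior angle θ_{T₀,max} satisfies θ_{T₀,max} ≤ γ₁ also satisfies H_{T₀}/h_{T₀} ≤ γ₀. -/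
open MeasureTheory ENNReal EuclideanGeometry

noncomputable section

open Pointwise

namespace Stmt5Aux

def E0 : Euc 2 := EuclideanSpace.single 0 1
def E1 : Euc 2 := EuclideanSpace.single 1 1

def Mlin (u v : Euc 2) : Euc 2 →ₗ[ℝ] Euc 2 where
  toFun x := x 0 • u + x 1 • v
  map_add' x y := by
    simp only [PiLp.add_apply, add_smul]
    module
  map_smul' c x := by
    simp only [PiLp.smul_apply, smul_eq_mul, RingHom.id_apply, smul_add, smul_smul]

lemma Mlin_apply (u v x : Euc 2) : Mlin u v x = x 0 • u + x 1 • v := rfl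

lemma det_Mlin (u v : Euc 2) : LinearMap.det (Mlin u v) = u 0 * v 1 - v 0 * u 1 := by
  rw [← LinearMap.det_toMatrix (EuclideanSpace.basisFun (Fin 2) ℝ).toBasis, Matrix.det_fin_two]
  simp [LinearMap.toMatrix_apply, Mlin_apply, OrthonormalBasis.coe_toBasis_repr_apply,
    EuclideanSpace.basisFun_repr, OrthonormalBasis.coe_toBasis, EuclideanSpace.basisFun_apply,
    EuclideanSpace.single_apply]

lemma stdTri_hull : convexHull ℝ {(0:Euc 2), E0, E1}
    = {x : Euc 2 | 0 ≤ x 0 ∧ 0 ≤ x 1 ∧ x 0 + x 1 ≤ 1} := by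
  apply Set.Subset.antisymm
  · apply convexHull_min
    · rintro x (rfl | rfl | rfl)
      · simp
      · simp [E0, EuclideanSpace.single_apply]
      · simp [E1, EuclideanSpace.single_apply]
    · rintro x ⟨hx0, hx1, hxs⟩ y ⟨hy0, hy1, hys⟩ a b ha hb hab
      refine ⟨?_, ?_, ?_⟩ <;>
        simp only [PiLp.add_apply, PiLp.smul_apply, smul_eq_mul]
      · positivity
      · positivity
      · nlinarith
  · rintro x ⟨hx0, hx1, hxs⟩
    rw [show ({(0:Euc 2), E0, E1} : Set (Euc 2)) = insert 0 {E0, E1} from rfl,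
      convexHull_insert ⟨E0, by simp⟩, convexHull_pair]
    by_cases ht : x 0 + x 1 = 0
    · have h0 : x 0 = 0 := by linarith
      have h1 : x 1 = 0 := by linarith
      have : x = 0 := by
        ext i
        fin_cases i <;> simp [h0, h1]
      subst this
      exact mem_convexJoin.2 ⟨0, rfl, E0, left_mem_segment ℝ E0 E1, left_mem_segment ℝ _ _⟩
    · have ht' : 0 < x 0 + x 1 := lt_of_le_of_ne (by linarith) (Ne.symm ht)
      set t := x 0 + x 1 with htdef
      refine mem_convexJoin.2 ⟨0, rfl, (x 0 / t) • E0 + (x 1 / t) • E1,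
        ⟨x 0 / t, x 1 / t, by positivity, by positivity, by field_simp; rw [htdef], rfl⟩,
        1 - t, t, by linarith, le_of_lt ht', by ring, ?_⟩
      ext i
      fin_cases i <;>
        simp [E0, E1, EuclideanSpace.single_apply, PiLp.add_apply, PiLp.smul_apply] <;>
        field_simp

lemma stdTri_vol :
    (volume {x : Euc 2 | 0 ≤ x 0 ∧ 0 ≤ x 1 ∧ x 0 + x 1 ≤ 1}) = ENNReal.ofReal (1/2) := by
  have h1 : {x : Euc 2 | 0 ≤ x 0 ∧ 0 ≤ x 1 ∧ x 0 + x 1 ≤ 1}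
      = (MeasurableEquiv.toLp 2 (Fin 2 → ℝ)).symm ⁻¹'
        ((MeasurableEquiv.finTwoArrow : (Fin 2 → ℝ) ≃ᵐ ℝ × ℝ) ⁻¹'
          {p : ℝ × ℝ | 0 ≤ p.1 ∧ 0 ≤ p.2 ∧ p.1 + p.2 ≤ 1}) := rfl
  rw [h1,
    (EuclideanSpace.volume_preserving_symm_measurableEquiv_toLp (Fin 2)).measure_preimage_equiv,
    (volume_preserving_finTwoArrow ℝ).measure_preimage_equiv]
  have hm : MeasurableSet {p : ℝ × ℝ | 0 ≤ p.1 ∧ 0 ≤ p.2 ∧ p.1 + p.2 ≤ 1} := by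
    apply MeasurableSet.inter
    · exact measurableSet_le measurable_const measurable_fst
    apply MeasurableSet.inter
    · exact measurableSet_le measurable_const measurable_snd
    · exact measurableSet_le (measurable_fst.add measurable_snd) measurable_const
  rw [show (volume : Measure (ℝ × ℝ)) = (volume : Measure ℝ).prod volume from rfl,
    Measure.prod_apply hm]
  have hslice : ∀ x : ℝ, volume (Prod.mk x ⁻¹' {p : ℝ × ℝ | 0 ≤ p.1 ∧ 0 ≤ p.2 ∧ p.1 + p.2 ≤ 1})
      = Set.indicator (Set.Icc (0:ℝ) 1) (fun x => ENNReal.ofReal (1 - x)) x := by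
    intro x
    by_cases hx : x ∈ Set.Icc (0:ℝ) 1
    · rw [Set.indicator_of_mem hx]
      have : Prod.mk x ⁻¹' {p : ℝ × ℝ | 0 ≤ p.1 ∧ 0 ≤ p.2 ∧ p.1 + p.2 ≤ 1}
          = Set.Icc 0 (1 - x) := by
        ext y
        simp only [Set.mem_preimage, Set.mem_setOf_eq, Set.mem_Icc]
        constructor
        · rintro ⟨_, h2, h3⟩; exact ⟨h2, by linarith⟩
        · rintro ⟨h2, h3⟩; exact ⟨hx.1, h2, by linarith⟩
      rw [this, Real.volume_Icc]
      ring_nf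
    · rw [Set.indicator_of_notMem hx]
      have : Prod.mk x ⁻¹' {p : ℝ × ℝ | 0 ≤ p.1 ∧ 0 ≤ p.2 ∧ p.1 + p.2 ≤ 1} = ∅ := by
        ext y
        simp only [Set.mem_preimage, Set.mem_setOf_eq, Set.mem_empty_iff_false, iff_false]
        rintro ⟨h1, h2, h3⟩
        simp only [Set.mem_Icc, not_and_or, not_le] at hx
        rcases hx with h | h
        · linarith
        · linarith
      rw [this]; simp
  rw [lintegral_congr hslice, lintegral_indicator measurableSet_Icc]
  rw [← ofReal_integral_eq_lintegral_ofReal]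
  · congr 1
    rw [MeasureTheory.integral_Icc_eq_integral_Ioc,
      ← intervalIntegral.integral_of_le (by norm_num : (0:ℝ) ≤ 1)]
    rw [intervalIntegral.integral_sub intervalIntegrable_const
      intervalIntegral.intervalIntegrable_id]
    simp
    norm_num
  · apply Integrable.sub (integrable_const 1)
    exact (intervalIntegrable_iff_integrableOn_Icc_of_le (by norm_num : (0:ℝ) ≤ 1)).mp
      (intervalIntegral.intervalIntegrable_id)
  · filter_upwards [MeasureTheory.ae_restrict_mem measurableSet_Icc] with x hx
    simp only [Set.mem_Icc] at hx
    simp only [Pi.zero_apply]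
    linarith [hx.2]

/-- Area of a triangle with vertices `A B C`. -/
lemma triangle_area (A B C : Euc 2) :
    (volume (convexHull ℝ {A, B, C})).toReal
      = 1/2 * (dist A B * dist A C * Real.sin (∠ B A C)) := by
  set u := B - A with hu
  set v := C - A with hv
  have himg : ({A, B, C} : Set (Euc 2)) = (fun x => A + x) '' ((Mlin u v) '' {0, E0, E1}) := by
    have h0 : Mlin u v 0 = 0 := by simp [Mlin]
    have h1 : Mlin u v E0 = u := by
      simp [Mlin_apply, E0, EuclideanSpace.single_apply]
    have h2 : Mlin u v E1 = v := by
      simp [Mlin_apply, E1, EuclideanSpace.single_apply]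
    simp only [Set.image_insert_eq, Set.image_singleton, h0, h1, h2, hu, hv]
    rw [← hu, ← hv, h1, h2, hu, hv]
    norm_num
  have haff : convexHull ℝ ({A, B, C} : Set (Euc 2))
      = (fun x => A + x) '' ((Mlin u v) '' (convexHull ℝ {0, E0, E1})) := by
    rw [himg]
    have hA : (fun x => A + x) = ⇑(AffineEquiv.constVAdd ℝ (Euc 2) A).toAffineMap := by
      funext x; simp [AffineEquiv.constVAdd_apply]
    rw [hA, ← AffineMap.image_convexHull, ← LinearMap.image_convexHull]
  rw [haff]
  have himg2 : (fun x => A + x) '' ((Mlin u v) '' (convexHull ℝ {0, E0, E1}))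
      = A +ᵥ ((Mlin u v) '' (convexHull ℝ {0, E0, E1})) := by
    rw [← Set.image_vadd]; rfl
  rw [himg2, measure_vadd, Measure.addHaar_image_linearMap, stdTri_hull, stdTri_vol,
    det_Mlin]
  rw [← ofReal_mul (abs_nonneg _), toReal_ofReal (by positivity)]
  have hsin : Real.sin (∠ B A C) * (‖u‖ * ‖v‖) = |u 0 * v 1 - v 0 * u 1| := by
    rw [show (∠ B A C) = InnerProductGeometry.angle u v from rfl]
    rw [InnerProductGeometry.sin_angle_mul_norm_mul_norm]
    have h : (inner ℝ u u : ℝ) * inner ℝ v v - inner ℝ u v * inner ℝ u v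
        = (u 0 * v 1 - v 0 * u 1)^2 := by
      simp only [PiLp.inner_apply, RCLike.inner_apply, conj_trivial, Fin.sum_univ_two]
      ring
    rw [h, Real.sqrt_sq_eq_abs]
  rw [show dist A B = ‖u‖ from by rw [dist_eq_norm', hu],
      show dist A C = ‖v‖ from by rw [dist_eq_norm', hv], ← hsin]
  ring

lemma sin_lb {γ₁ θ : ℝ} (hγ₁ : 0 < γ₁) (hγ₁' : γ₁ < Real.pi)
    (h1 : (Real.pi - γ₁)/2 ≤ θ) (h2 : θ ≤ γ₁) :
    min (Real.sin ((Real.pi - γ₁)/2)) (Real.sin γ₁) ≤ Real.sin θ := by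
  have hpi := Real.pi_pos
  rcases le_total θ (Real.pi/2) with hθ | hθ
  · refine le_trans (min_le_left _ _) ?_
    apply Real.strictMonoOn_sin.monotoneOn ⟨by linarith, by linarith⟩ ⟨by linarith, hθ⟩ h1
  · refine le_trans (min_le_right _ _) ?_
    rw [← Real.sin_pi_sub θ, ← Real.sin_pi_sub γ₁]
    apply Real.strictMonoOn_sin.monotoneOn ⟨by linarith, by linarith⟩
      ⟨by linarith, by linarith⟩ (by linarith)

lemma spos {γ₁ : ℝ} (hγ₁ : 0 < γ₁) (hγ₁' : γ₁ < Real.pi) :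
    0 < min (Real.sin ((Real.pi - γ₁)/2)) (Real.sin γ₁) := by
  have hpi := Real.pi_pos
  apply lt_min
  · apply Real.sin_pos_of_pos_of_lt_pi <;> [linarith; linarith]
  · exact Real.sin_pos_of_pos_of_lt_pi hγ₁ hγ₁'

/-- Core estimate, assuming `AB` is the longest edge. -/
lemma core {γ₁ : ℝ} (hγ₁ : 0 < γ₁) (hγ₁' : γ₁ < Real.pi)
    (A B C : Euc 2) (hnc : ¬Collinear ℝ ({A, B, C} : Set (Euc 2)))
    (hmax1 : dist A C ≤ dist A B) (hmax2 : dist B C ≤ dist A B)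
    (ha : ∠ B A C ≤ γ₁) (hb : ∠ A B C ≤ γ₁) (hc : ∠ A C B ≤ γ₁)
    {m : ℝ} (hm : 0 < m) (hmAC : m ≤ dist A C) (hmBC : m ≤ dist B C) :
    dist A B ^ 2 / (volume (convexHull ℝ ({A, B, C} : Set (Euc 2)))).toReal * m / dist A B
      ≤ 2 / min (Real.sin ((Real.pi - γ₁)/2)) (Real.sin γ₁) := by
  have hpi := Real.pi_pos
  set s := min (Real.sin ((Real.pi - γ₁)/2)) (Real.sin γ₁) with hs
  have hs0 : 0 < s := spos hγ₁ hγ₁'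
  -- distinctness
  have hAC : A ≠ C := by
    rintro rfl
    apply hnc
    have h : ({A, B, A} : Set (Euc 2)) = {A, B} := by ext x; simp; tauto
    rw [h]; exact collinear_pair ℝ A B
  have hBC : B ≠ C := by
    rintro rfl
    apply hnc
    have h : ({A, B, B} : Set (Euc 2)) = {A, B} := by ext x; simp
    rw [h]; exact collinear_pair ℝ A B
  have hAB : A ≠ B := by
    rintro rfl
    apply hnc
    have h : ({A, A, C} : Set (Euc 2)) = {A, C} := by ext x; simp
    rw [h]; exact collinear_pair ℝ A C
  have hdAB : 0 < dist A B := dist_pos.2 hAB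
  have hdAC : 0 < dist A C := dist_pos.2 hAC
  have hdBC : 0 < dist B C := dist_pos.2 hBC
  -- angle sum
  have hsum : ∠ B A C + ∠ A B C + ∠ A C B = Real.pi := by
    have := angle_add_angle_add_angle_eq_pi (p₁ := C) (p₂ := A) (p₃ := B) hAC
    rw [angle_comm C A B, angle_comm B C A] at this
    linarith [this]
  rcases le_total (∠ A B C) (∠ B A C) with hcase | hcase
  · -- use vertex A
    have hncA : ¬Collinear ℝ ({B, A, C} : Set (Euc 2)) := by
      rwa [Set.insert_comm]
    have hθpos : 0 < ∠ B A C := angle_pos_of_not_collinear hncA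
    have hθlt : ∠ B A C < Real.pi := angle_lt_pi_of_not_collinear hncA
    have hsinθ : 0 < Real.sin (∠ B A C) := Real.sin_pos_of_pos_of_lt_pi hθpos hθlt
    have hlb : s ≤ Real.sin (∠ B A C) := by
      apply sin_lb hγ₁ hγ₁' _ ha
      linarith
    rw [triangle_area A B C]
    have hLHS : dist A B ^ 2 / (1/2 * (dist A B * dist A C * Real.sin (∠ B A C))) * m / dist A B
        = 2 * m / (dist A C * Real.sin (∠ B A C)) := by
      field_simp
    rw [hLHS, div_le_div_iff₀ (by positivity) hs0]
    nlinarith [mul_le_mul hlb hmAC (le_of_lt hm) (le_of_lt hsinθ)]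
  · -- use vertex B
    have hncB : ¬Collinear ℝ ({A, B, C} : Set (Euc 2)) := hnc
    have hθpos : 0 < ∠ A B C := angle_pos_of_not_collinear hncB
    have hθlt : ∠ A B C < Real.pi := angle_lt_pi_of_not_collinear hncB
    have hsinθ : 0 < Real.sin (∠ A B C) := Real.sin_pos_of_pos_of_lt_pi hθpos hθlt
    have hlb : s ≤ Real.sin (∠ A B C) := by
      apply sin_lb hγ₁ hγ₁' _ hb
      linarith
    have hset : ({A, B, C} : Set (Euc 2)) = {B, A, C} := Set.insert_comm A B {C}
    rw [hset, triangle_area B A C, dist_comm B A]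
    have hLHS : dist A B ^ 2 / (1/2 * (dist A B * dist B C * Real.sin (∠ A B C))) * m / dist A B
        = 2 * m / (dist B C * Real.sin (∠ A B C)) := by
      field_simp
    rw [hLHS, div_le_div_iff₀ (by positivity) hs0]
    nlinarith [mul_le_mul hlb hmBC (le_of_lt hm) (le_of_lt hsinθ)]

end Stmt5Aux

lemma Stmt5Aux.distinct_of_not_collinear (A B C : Euc 2)
    (hnc : ¬Collinear ℝ ({A, B, C} : Set (Euc 2))) : A ≠ B ∧ A ≠ C ∧ B ≠ C := by
  refine ⟨?_, ?_, ?_⟩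
  · rintro rfl
    apply hnc
    have h : ({A, A, C} : Set (Euc 2)) = {A, C} := by ext x; simp
    rw [h]; exact collinear_pair ℝ A C
  · rintro rfl
    apply hnc
    have h : ({A, B, A} : Set (Euc 2)) = {A, B} := by ext x; simp; tauto
    rw [h]; exact collinear_pair ℝ A B
  · rintro rfl
    apply hnc
    have h : ({A, B, B} : Set (Euc 2)) = {A, B} := by ext x; simp
    rw [h]; exact collinear_pair ℝ A B

/-- for every `γ₁` with `0 < γ₁ < π` there exists `γ₀ > 0` such that every
nondegenerate triangle `T₀` (vertices `A`, `B`, `C`) whose maximum interior angle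
satisfies `θ_{T₀,max} ≤ γ₁` also satisfies `H_{T₀}/h_{T₀} ≤ γ₀`, where `h_{T₀}` is the
longest edge length and `H_{T₀} = (h_{T₀}²/|T₀|)·min_i |L_i|`. -/
theorem stmt_5 (γ₁ : ℝ) (hγ₁ : 0 < γ₁) (hγ₁' : γ₁ < Real.pi) :
    ∃ γ₀ : ℝ, 0 < γ₀ ∧
      ∀ A B C : Euc 2, AffineIndependent ℝ ![A, B, C] →
        max (∠ B A C) (max (∠ A B C) (∠ A C B)) ≤ γ₁ →
        ∀ hT₀ HT₀ : ℝ,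
          hT₀ = max (dist A B) (max (dist A C) (dist B C)) →
          HT₀ = hT₀ ^ 2 / (volume (convexHull ℝ {A, B, C})).toReal *
            min (dist A B) (min (dist A C) (dist B C)) →
          HT₀ / hT₀ ≤ γ₀ := by
  have hs0 : 0 < min (Real.sin ((Real.pi - γ₁)/2)) (Real.sin γ₁) := Stmt5Aux.spos hγ₁ hγ₁'
  set s := min (Real.sin ((Real.pi - γ₁)/2)) (Real.sin γ₁) with hsdef
  refine ⟨2 / s, by positivity, ?_⟩
  intro A B C hind hang hT₀ HT₀ hh hH
  subst hH; subst hh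
  have hnc : ¬Collinear ℝ ({A, B, C} : Set (Euc 2)) :=
    affineIndependent_iff_not_collinear_set.1 hind
  obtain ⟨hAB, hAC, hBC⟩ := Stmt5Aux.distinct_of_not_collinear A B C hnc
  have ha : ∠ B A C ≤ γ₁ := le_trans (le_max_left _ _) hang
  have hb : ∠ A B C ≤ γ₁ := le_trans (le_trans (le_max_left _ _) (le_max_right _ _)) hang
  have hc : ∠ A C B ≤ γ₁ := le_trans (le_trans (le_max_right _ _) (le_max_right _ _)) hang
  set m := min (dist A B) (min (dist A C) (dist B C)) with hmdef
  have hm : 0 < m := lt_min (dist_pos.2 hAB) (lt_min (dist_pos.2 hAC) (dist_pos.2 hBC))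
  have hm1 : m ≤ dist A B := min_le_left _ _
  have hm2 : m ≤ dist A C := le_trans (min_le_right _ _) (min_le_left _ _)
  have hm3 : m ≤ dist B C := le_trans (min_le_right _ _) (min_le_right _ _)
  rcases le_total (dist A C) (dist A B) with h1 | h1
  · rcases le_total (dist B C) (dist A B) with h2 | h2
    · -- AB is the longest edge
      rw [max_eq_left (max_le h1 h2)]
      exact Stmt5Aux.core hγ₁ hγ₁' A B C hnc h1 h2 ha hb hc hm hm2 hm3
    · -- BC is the longest edge
      have hmax : max (dist A B) (max (dist A C) (dist B C)) = dist B C := by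
        rw [max_eq_right (le_trans h1 h2), max_eq_right h2]
      rw [hmax]
      have hnc' : ¬Collinear ℝ ({B, C, A} : Set (Euc 2)) := by
        rw [show ({B, C, A} : Set (Euc 2)) = {A, B, C} by
          rw [Set.insert_comm A B, Set.pair_comm A C]] at *
        exact hnc
      have := Stmt5Aux.core hγ₁ hγ₁' B C A hnc'
        (by rw [dist_comm B A]; exact h2) (by rw [dist_comm C A]; exact le_trans h1 h2)
        (by rw [angle_comm]; exact hb) (by rw [angle_comm]; exact hc) ha
        hm (by rw [dist_comm B A]; exact hm1) (by rw [dist_comm C A]; exact hm2)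
      rwa [show ({B, C, A} : Set (Euc 2)) = {A, B, C} by
        rw [Set.insert_comm A B, Set.pair_comm A C]] at this
  · rcases le_total (dist B C) (dist A C) with h2 | h2
    · -- AC is the longest edge
      have hmax : max (dist A B) (max (dist A C) (dist B C)) = dist A C := by
        rw [max_eq_left h2, max_eq_right h1]
      rw [hmax]
      have hnc' : ¬Collinear ℝ ({A, C, B} : Set (Euc 2)) := by
        rw [show ({A, C, B} : Set (Euc 2)) = {A, B, C} by rw [Set.pair_comm B C]] at *
        exact hnc
      have := Stmt5Aux.core hγ₁ hγ₁' A C B hnc'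
        h1 (by rw [dist_comm C B]; exact h2)
        (by rw [angle_comm]; exact ha) hc hb
        hm hm1 (by rw [dist_comm C B]; exact hm3)
      rwa [show ({A, C, B} : Set (Euc 2)) = {A, B, C} by rw [Set.pair_comm B C]] at this
    · -- BC is the longest edge
      have hmax : max (dist A B) (max (dist A C) (dist B C)) = dist B C := by
        rw [max_eq_right h2, max_eq_right (le_trans h1 h2)]
      rw [hmax]
      have hnc' : ¬Collinear ℝ ({B, C, A} : Set (Euc 2)) := by
        rw [show ({B, C, A} : Set (Euc 2)) = {A, B, C} by
          rw [Set.insert_comm A B, Set.pair_comm A C]] at *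
        exact hnc
      have := Stmt5Aux.core hγ₁ hγ₁' B C A hnc'
        (by rw [dist_comm B A]; exact le_trans h1 h2) (by rw [dist_comm C A]; exact h2)
        (by rw [angle_comm]; exact hb) (by rw [angle_comm]; exact hc) ha
        hm (by rw [dist_comm B A]; exact hm1) (by rw [dist_comm C A]; exact hm2)
      rwa [show ({B, C, A} : Set (Euc 2)) = {A, B, C} by
        rw [Set.insert_comm A B, Set.pair_comm A C]] at this
end
end

section
/- For every γ₀ > 0 there exists γ₁ with 0 < γ₁ < π such that every nondegenerate triangle T₀ in the Euclidean plane with H_{T₀}/h_{T₀} ≤ γ₀ has maximum interior angle θ_{T₀,max} ≤ γ₁. -/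
open MeasureTheory ENNReal EuclideanGeometry

noncomputable section

open Pointwise

lemma area_le (A B C : Euc 2) :
    (volume (convexHull ℝ ({A, B, C} : Set (Euc 2)))).toReal ≤
      Real.sin (∠ B A C) * (dist A B * dist A C) := by
  set u : Euc 2 := B - A with hu
  set v : Euc 2 := C - A with hv
  set b := EuclideanSpace.basisFun (Fin 2) ℝ with hb
  set f : Euc 2 →ₗ[ℝ] Euc 2 := b.toBasis.constr ℝ ![u, v] with hf
  set P : Set (Euc 2) := parallelepiped ⇑b with hP
  -- memberships in P
  have h0P : (0 : Euc 2) ∈ P := by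
    rw [hP, mem_parallelepiped_iff]
    exact ⟨0, ⟨le_rfl, zero_le_one⟩, by simp⟩
  have hb0 : (b 0 : Euc 2) ∈ P := by
    rw [hP, mem_parallelepiped_iff]
    refine ⟨![1, 0], ⟨?_, ?_⟩, ?_⟩
    · intro j; fin_cases j <;> norm_num
    · intro j; fin_cases j <;> norm_num
    · simp [Fin.sum_univ_two]
  have hb1 : (b 1 : Euc 2) ∈ P := by
    rw [hP, mem_parallelepiped_iff]
    refine ⟨![0, 1], ⟨?_, ?_⟩, ?_⟩
    · intro j; fin_cases j <;> norm_num
    · intro j; fin_cases j <;> norm_num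
    · simp [Fin.sum_univ_two]
  have hsub : convexHull ℝ ({A, B, C} : Set (Euc 2)) ⊆ A +ᵥ f '' P := by
    apply convexHull_min _ (((convex_parallelepiped ⇑b).linear_image f).vadd A)
    intro x hx
    rcases hx with rfl | rfl | rfl
    · exact ⟨f 0, ⟨0, h0P, rfl⟩, by simp⟩
    · refine ⟨f (b.toBasis 0), ⟨b.toBasis 0, by rw [b.coe_toBasis]; exact hb0, rfl⟩, ?_⟩
      have : f (b.toBasis 0) = u := by rw [hf, Module.Basis.constr_basis]; rfl
      rw [this]
      simp [hu]
    · refine ⟨f (b.toBasis 1), ⟨b.toBasis 1, by rw [b.coe_toBasis]; exact hb1, rfl⟩, ?_⟩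
      have : f (b.toBasis 1) = v := by rw [hf, Module.Basis.constr_basis]; rfl
      rw [this]
      simp [hv]
  have hvolP : volume P = 1 := b.volume_parallelepiped
  have hvol : volume (convexHull ℝ ({A, B, C} : Set (Euc 2))) ≤
      ENNReal.ofReal |LinearMap.det f| := by
    calc volume (convexHull ℝ ({A, B, C} : Set (Euc 2))) ≤ volume (A +ᵥ f '' P) :=
          measure_mono hsub
      _ = volume (f '' P) := by rw [measure_vadd]
      _ = ENNReal.ofReal |LinearMap.det f| * volume P :=
          Measure.addHaar_image_linearMap volume f P
      _ = ENNReal.ofReal |LinearMap.det f| := by rw [hvolP, mul_one]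
  have hdet : LinearMap.det f = u 0 * v 1 - v 0 * u 1 := by
    rw [← LinearMap.det_toMatrix b.toBasis f, Matrix.det_fin_two]
    simp only [LinearMap.toMatrix_apply, hf, Module.Basis.constr_basis,
      OrthonormalBasis.coe_toBasis_repr_apply, EuclideanSpace.basisFun_repr]
    rfl
  have hin : ∀ x y : Euc 2, (inner ℝ x y : ℝ) = x 0 * y 0 + x 1 * y 1 := by
    intro x y
    simp [PiLp.inner_apply, Fin.sum_univ_two, RCLike.inner_apply, mul_comm]
  have hkey := InnerProductGeometry.sin_angle_mul_norm_mul_norm u v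
  have hdet2 : |LinearMap.det f| =
      Real.sin (InnerProductGeometry.angle u v) * (‖u‖ * ‖v‖) := by
    rw [hkey, ← Real.sqrt_sq_eq_abs]
    congr 1
    rw [hdet, hin, hin, hin]
    ring
  have hang : ∠ B A C = InnerProductGeometry.angle u v := rfl
  have hdAB : dist A B = ‖u‖ := by rw [dist_comm, dist_eq_norm]
  have hdAC : dist A C = ‖v‖ := by rw [dist_comm, dist_eq_norm]
  rw [hang, hdAB, hdAC]
  refine ENNReal.toReal_le_of_le_ofReal ?_ ?_
  · exact mul_nonneg (Real.sin_nonneg_of_nonneg_of_le_pi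
      (InnerProductGeometry.angle_nonneg u v) (InnerProductGeometry.angle_le_pi u v))
      (mul_nonneg (norm_nonneg _) (norm_nonneg _))
  · rw [← hdet2]; exact hvol

lemma area_pos (A B C : Euc 2) (h : AffineIndependent ℝ ![A, B, C]) :
    0 < (volume (convexHull ℝ ({A, B, C} : Set (Euc 2)))).toReal := by
  have hrange : Set.range ![A, B, C] = ({A, B, C} : Set (Euc 2)) := by
    ext x
    constructor
    · rintro ⟨i, rfl⟩; fin_cases i <;> simp
    · rintro (rfl | rfl | rfl)
      exacts [⟨0, rfl⟩, ⟨1, rfl⟩, ⟨2, rfl⟩]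
  have htop : affineSpan ℝ ({A, B, C} : Set (Euc 2)) = ⊤ := by
    rw [← hrange]
    rw [h.affineSpan_eq_top_iff_card_eq_finrank_add_one]
    simp [finrank_euclideanSpace_fin]
  have hne : (interior (convexHull ℝ ({A, B, C} : Set (Euc 2)))).Nonempty :=
    interior_convexHull_nonempty_iff_affineSpan_eq_top.mpr htop
  have h1 : 0 < volume (convexHull ℝ ({A, B, C} : Set (Euc 2))) :=
    Measure.measure_pos_of_nonempty_interior _ hne
  have h2 : volume (convexHull ℝ ({A, B, C} : Set (Euc 2))) ≠ ⊤ := by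
    exact (IsCompact.measure_lt_top ((Set.toFinite _).isCompact_convexHull (𝕜 := ℝ))).ne
  exact ENNReal.toReal_pos h1.ne' h2

lemma angle_bound {θ s : ℝ} (h0 : 0 ≤ θ) (hpi : θ ≤ Real.pi) (hs0 : 0 < s) (hs1 : s ≤ 1)
    (h : s ≤ Real.sin θ) : θ ≤ Real.pi - Real.arcsin s := by
  rcases le_or_gt θ (Real.pi / 2) with hle | hlt
  · have := Real.arcsin_le_pi_div_two s
    linarith
  · by_contra hc
    push_neg at hc
    have h1 : Real.pi - θ < Real.arcsin s := by linarith
    have h2 : Real.sin (Real.pi - θ) < Real.sin (Real.arcsin s) := by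
      apply Real.strictMonoOn_sin
      · constructor <;> [linarith [Real.pi_pos]; linarith]
      · constructor <;> [linarith [Real.neg_pi_div_two_le_arcsin s];
          exact Real.arcsin_le_pi_div_two s]
      · exact h1
    rw [Real.sin_pi_sub, Real.sin_arcsin (by linarith) hs1] at h2
    linarith

lemma master (γ₀ : ℝ) (hγ₀ : 0 < γ₀) (A B C : Euc 2)
    (hpos : 0 < (volume (convexHull ℝ ({A, B, C} : Set (Euc 2)))).toReal)
    (h m : ℝ)
    (hhAB : dist A B ≤ h) (hhAC : dist A C ≤ h)
    (hm : m = min (dist A B) (min (dist A C) (dist B C)))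
    (hkey : h * m ≤ γ₀ * (volume (convexHull ℝ ({A, B, C} : Set (Euc 2)))).toReal) :
    ∠ B A C ≤ Real.pi - Real.arcsin (min (1 / γ₀) 1) := by
  set area := (volume (convexHull ℝ ({A, B, C} : Set (Euc 2)))).toReal with harea
  rcases le_or_gt (∠ B A C) (Real.pi / 2) with hle | hlt
  · have h1 : Real.arcsin (min (1 / γ₀) 1) ≤ Real.pi / 2 := Real.arcsin_le_pi_div_two _
    linarith
  · have hcos : Real.cos (∠ B A C) ≤ 0 := by
      apply Real.cos_nonpos_of_pi_div_two_le_of_le hlt.le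
      linarith [angle_le_pi B A C, Real.pi_pos]
    have hlaw := EuclideanGeometry.law_cos B A C
    rw [dist_comm B A, dist_comm C A] at hlaw
    have hterm : 0 ≤ dist A B * dist A C * (-Real.cos (∠ B A C)) :=
      mul_nonneg (mul_nonneg dist_nonneg dist_nonneg) (neg_nonneg.2 hcos)
    have hBC1 : dist A B ≤ dist B C := by
      have hsq : dist A B ^ 2 ≤ dist B C ^ 2 := by
        nlinarith [hlaw, hterm, dist_nonneg (x := A) (y := B), dist_nonneg (x := A) (y := C)]
      exact (pow_le_pow_iff_left₀ dist_nonneg dist_nonneg (by norm_num)).mp hsq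
    have hBC2 : dist A C ≤ dist B C := by
      have hsq : dist A C ^ 2 ≤ dist B C ^ 2 := by
        nlinarith [hlaw, hterm, dist_nonneg (x := A) (y := B), dist_nonneg (x := A) (y := C)]
      exact (pow_le_pow_iff_left₀ dist_nonneg dist_nonneg (by norm_num)).mp hsq
    have hm' : m = min (dist A B) (dist A C) := by
      rw [hm, min_eq_left hBC2]
    have hprod : dist A B * dist A C ≤ h * m := by
      rcases le_total (dist A B) (dist A C) with hab | hab
      · rw [hm', min_eq_left hab]
        nlinarith [hhAC, dist_nonneg (x := A) (y := B)]
      · rw [hm', min_eq_right hab]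
        nlinarith [hhAB, dist_nonneg (x := A) (y := C)]
    have hsin0 : 0 ≤ Real.sin (∠ B A C) :=
      Real.sin_nonneg_of_nonneg_of_le_pi (angle_nonneg B A C) (angle_le_pi B A C)
    have hup : area ≤ Real.sin (∠ B A C) * (γ₀ * area) := by
      calc area ≤ Real.sin (∠ B A C) * (dist A B * dist A C) := area_le A B C
        _ ≤ Real.sin (∠ B A C) * (h * m) := by
            exact mul_le_mul_of_nonneg_left hprod hsin0
        _ ≤ Real.sin (∠ B A C) * (γ₀ * area) := mul_le_mul_of_nonneg_left hkey hsin0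
    have hsin : 1 / γ₀ ≤ Real.sin (∠ B A C) := by
      rw [div_le_iff₀ hγ₀]
      nlinarith
    refine angle_bound (angle_nonneg B A C) (angle_le_pi B A C) ?_ (min_le_right _ _) ?_
    · exact lt_min (by positivity) one_pos
    · exact le_trans (min_le_left _ _) hsin

/-- for every `γ₀ > 0` there exists `γ₁` with `0 < γ₁ < π` such that every
nondegenerate triangle `T₀` (vertices `A`, `B`, `C`) with `H_{T₀}/h_{T₀} ≤ γ₀` has
maximum interior angle `θ_{T₀,max} ≤ γ₁`, where `h_{T₀}` is the longest edge length and
`H_{T₀} = (h_{T₀}²/|T₀|)·min_i |L_i|`. -/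
theorem stmt_6 (γ₀ : ℝ) (hγ₀ : 0 < γ₀) :
    ∃ γ₁ : ℝ, 0 < γ₁ ∧ γ₁ < Real.pi ∧
      ∀ A B C : Euc 2, AffineIndependent ℝ ![A, B, C] →
        ∀ hT₀ HT₀ : ℝ,
          hT₀ = max (dist A B) (max (dist A C) (dist B C)) →
          HT₀ = hT₀ ^ 2 / (volume (convexHull ℝ {A, B, C})).toReal *
            min (dist A B) (min (dist A C) (dist B C)) →
          HT₀ / hT₀ ≤ γ₀ →
          max (∠ B A C) (max (∠ A B C) (∠ A C B)) ≤ γ₁ := by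
  refine ⟨Real.pi - Real.arcsin (min (1 / γ₀) 1), ?_, ?_, ?_⟩
  · have := Real.arcsin_le_pi_div_two (min (1 / γ₀) 1)
    linarith [Real.pi_pos]
  · have : 0 < Real.arcsin (min (1 / γ₀) 1) :=
      Real.arcsin_pos.mpr (lt_min (by positivity) one_pos)
    linarith
  · intro A B C hind hT₀ HT₀ hh hH hle
    have hAB : A ≠ B := by
      intro he
      exact absurd (hind.injective (show ![A, B, C] 0 = ![A, B, C] 1 by simp [he]))
        (by decide)
    have hpos : 0 < (volume (convexHull ℝ ({A, B, C} : Set (Euc 2)))).toReal :=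
      area_pos A B C hind
    set area := (volume (convexHull ℝ ({A, B, C} : Set (Euc 2)))).toReal with harea
    have hT₀pos : 0 < hT₀ := by
      rw [hh]
      exact lt_of_lt_of_le (dist_pos.mpr hAB) (le_max_left _ _)
    have d1 : dist A B ≤ hT₀ := hh ▸ le_max_left _ _
    have d2 : dist A C ≤ hT₀ := hh ▸ le_trans (le_max_left _ _) (le_max_right _ _)
    have d3 : dist B C ≤ hT₀ := hh ▸ le_trans (le_max_right _ _) (le_max_right _ _)
    have hkey : hT₀ * min (dist A B) (min (dist A C) (dist B C)) ≤ γ₀ * area := by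
      have h2 : hT₀ * min (dist A B) (min (dist A C) (dist B C)) = (HT₀ / hT₀) * area := by
        rw [hH]
        field_simp
      rw [h2]
      exact mul_le_mul_of_nonneg_right hle hpos.le
    have a1 : ∠ B A C ≤ Real.pi - Real.arcsin (min (1 / γ₀) 1) :=
      master γ₀ hγ₀ A B C hpos hT₀ _ d1 d2 rfl hkey
    have a2 : ∠ A B C ≤ Real.pi - Real.arcsin (min (1 / γ₀) 1) := by
      refine master γ₀ hγ₀ B A C (by rwa [Set.insert_comm]) hT₀
        (min (dist A B) (min (dist A C) (dist B C))) (by rwa [dist_comm]) d3 ?_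
        (by rwa [Set.insert_comm])
      simp [dist_comm, min_comm, min_left_comm, min_assoc]
    have a3 : ∠ A C B ≤ Real.pi - Real.arcsin (min (1 / γ₀) 1) := by
      refine master γ₀ hγ₀ C A B (by rw [Set.insert_comm C A, Set.pair_comm C B]; exact hpos)
        hT₀ (min (dist A B) (min (dist A C) (dist B C))) (by rwa [dist_comm]) (by rwa [dist_comm]) ?_
        (by rw [Set.insert_comm C A, Set.pair_comm C B]; exact hkey)
      simp [dist_comm, min_comm, min_left_comm, min_assoc]
    exact max_le a1 (max_le a2 a3)
end
end
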